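/- arXiv:1405.4718 — 7 statements merged into one kernel-verified Lean document; each statement's English description precedes it below -/
import Mathlib

section
/- Let λ, μ be weakly decreasing nonnegative integer vectors with λ_i ≥ μ_i for all i, and let 1 = (1,…,1) be the weight with |λ|−|μ| entries. Then every point of the Gelfand–Tsetlin polytope P_{λ/μ,1} all of whose entries are integers is an extreme point of P_{λ/μ,1}. -/
open Finset

/-- A real `(m+1) × n` array satisfying the Gelfand–Tsetlin inequalities:
rows increase upwards along columns, and down-right diagonals decrease.
Row `0` is the bottom row, row `m` the top row. -/
def IsGTPattern (m n : ℕ) (x : Fin (m + 1) → Fin n → ℝ) : Prop :=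
  (∀ (i : Fin m) (j : Fin n), x i.castSucc j ≤ x i.succ j) ∧
  (∀ (i : Fin m) (j : Fin n) (h : (j : ℕ) + 1 < n),
    x i.succ ⟨(j : ℕ) + 1, h⟩ ≤ x i.castSucc j)

/-- The Gelfand–Tsetlin polytope `P_{λ/μ,w}`: row `0` is `μ`, row `m` is `λ`,
and the weight vector `w` has `m` entries, prescribing the successive
differences of row sums. -/
def gtPolytope (m n : ℕ) (lam mu : Fin n → ℤ) (w : Fin m → ℤ) :
    Set (Fin (m + 1) → Fin n → ℝ) :=
  {x | IsGTPattern m n x ∧ (∀ j, x 0 j = (mu j : ℝ)) ∧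
    (∀ j, x (Fin.last m) j = (lam j : ℝ)) ∧
    ∀ i : Fin m, (∑ j, x i.succ j) - (∑ j, x i.castSucc j) = (w i : ℝ)}

/-- Every integral point of `P_{λ/μ,1}` (weight `(1,…,1)` with `|λ|-|μ|` entries)
is an extreme point of `P_{λ/μ,1}`. -/
theorem statement0 (n : ℕ) (hn : 1 ≤ n) (lam mu : Fin n → ℤ)
    (hlam : Antitone lam) (hmu : Antitone mu)
    (hmu0 : ∀ j, 0 ≤ mu j) (hge : ∀ j, mu j ≤ lam j)
    (N : ℕ) (hN : (N : ℤ) = ∑ j, lam j - ∑ j, mu j)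
    (x : Fin (N + 1) → Fin n → ℝ)
    (hx : x ∈ gtPolytope N n lam mu fun _ => 1)
    (hint : ∀ i j, ∃ z : ℤ, x i j = z) :
    x ∈ Set.extremePoints ℝ (gtPolytope N n lam mu fun _ => 1) := by
  refine ⟨hx, ?_⟩
  obtain ⟨⟨hmono, hdiag⟩, hbot, htop, hsum⟩ := hx
  have key : ∀ y z : Fin (N+1) → Fin n → ℝ, y ∈ gtPolytope N n lam mu (fun _ => 1) →
      z ∈ gtPolytope N n lam mu (fun _ => 1) → ∀ a b : ℝ, 0 < a → 0 < b → a + b = 1 →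
      a • y + b • z = x → y = x := by
    intro y z hy hz a b ha hb hab hyz
    obtain ⟨⟨hymono, _⟩, hybot, _, hysum⟩ := hy
    obtain ⟨⟨hzmono, _⟩, _, _, hzsum⟩ := hz
    have main : ∀ k : ℕ, ∀ hk : k < N + 1, ∀ j, y ⟨k, hk⟩ j = x ⟨k, hk⟩ j := by
      intro k
      induction k with
      | zero =>
        intro hk j
        rw [show (⟨0, hk⟩ : Fin (N+1)) = 0 from rfl, hybot, hbot]
      | succ k ih =>
        intro hk j
        have hkN : k < N := Nat.succ_lt_succ_iff.mp hk
        set i : Fin N := ⟨k, hkN⟩ with hi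
        have hcs : i.castSucc = (⟨k, Nat.lt_succ_of_lt hkN⟩ : Fin (N+1)) := rfl
        have hsc : i.succ = (⟨k+1, hk⟩ : Fin (N+1)) := rfl
        have hcomb : ∀ j', a * (y i.succ j' - y i.castSucc j')
            + b * (z i.succ j' - z i.castSucc j')
            = x i.succ j' - x i.castSucc j' := by
          intro j'
          have h1 := congrFun (congrFun hyz i.succ) j'
          have h2 := congrFun (congrFun hyz i.castSucc) j'
          simp only [Pi.add_apply, Pi.smul_apply, smul_eq_mul] at h1 h2
          linarith
        have hsumy : ∑ j', (y i.succ j' - y i.castSucc j') = 1 := by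
          have h := hysum i
          rw [Finset.sum_sub_distrib]
          push_cast at h
          linarith
        have hsumx : ∑ j', (x i.succ j' - x i.castSucc j') = 1 := by
          have h := hsum i
          rw [Finset.sum_sub_distrib]
          push_cast at h
          linarith
        have hle : ∀ j', y i.succ j' - y i.castSucc j' ≤ x i.succ j' - x i.castSucc j' := by
          intro j'
          obtain ⟨z1, hz1⟩ := hint i.succ j'
          obtain ⟨z2, hz2⟩ := hint i.castSucc j'
          have hdint : x i.succ j' - x i.castSucc j' = ((z1 - z2 : ℤ) : ℝ) := by
            push_cast
            rw [hz1, hz2]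
          by_cases hd : x i.succ j' - x i.castSucc j' = 0
          · have hc := hcomb j'
            have h1 := hymono i j'
            have h2 := hzmono i j'
            nlinarith
          · have h0 : (0:ℝ) ≤ ((z1 - z2 : ℤ) : ℝ) := by
              rw [← hdint]
              linarith [hmono i j']
            have hne : (z1 - z2 : ℤ) ≠ 0 := by
              intro hcon
              apply hd
              rw [hdint, hcon]
              norm_num
            have h1 : (1:ℤ) ≤ z1 - z2 := by
              have : (0:ℤ) ≤ z1 - z2 := by exact_mod_cast h0
              omega
            have h1' : (1:ℝ) ≤ x i.succ j' - x i.castSucc j' := by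
              rw [hdint]
              exact_mod_cast h1
            have hself : y i.succ j' - y i.castSucc j' ≤ 1 := by
              rw [← hsumy]
              exact Finset.single_le_sum
                (f := fun j'' => y i.succ j'' - y i.castSucc j'')
                (fun j'' _ => sub_nonneg.mpr (hymono i j'')) (Finset.mem_univ j')
            linarith
        have heq : ∀ j', y i.succ j' - y i.castSucc j' = x i.succ j' - x i.castSucc j' := by
          intro j'
          by_contra hne
          have hlt : y i.succ j' - y i.castSucc j' < x i.succ j' - x i.castSucc j' :=
            lt_of_le_of_ne (hle j') hne
          have : ∑ j'', (y i.succ j'' - y i.castSucc j'')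
              < ∑ j'', (x i.succ j'' - x i.castSucc j'') :=
            Finset.sum_lt_sum (fun j'' _ => hle j'') ⟨j', Finset.mem_univ j', hlt⟩
          rw [hsumy, hsumx] at this
          exact lt_irrefl _ this
        have hprev : y i.castSucc j = x i.castSucc j := by
          rw [hcs]
          exact ih _ j
        have hthis := heq j
        have hgoal : y i.succ j = x i.succ j := by linarith
        rw [← hsc]
        exact hgoal
    funext i j
    exact main i.val i.isLt j
  intro y hy z hz hseg
  obtain ⟨a, b, ha, hb, hab, hx'⟩ := hseg
  exact key y z hy hz a b ha hb hab hx'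
end

section
/- Let λ = (h,1,1,…,1) ∈ ℤ^l be a hook partition (h ≥ 1, l ≥ 1), let μ = (0,…,0), and let w = (w_1,…,w_{m−1}) be any nonnegative integer vector with w_1+…+w_{m−1} = h+l−1. Then every point of the Gelfand–Tsetlin polytope P_{λ/μ,w} all of whose entries are integers is an extreme point of P_{λ/μ,w}. -/
open Finset

/-- Monotonicity along columns: every entry is between the bottom and top rows. -/
lemma gt_mono_aux {m n : ℕ} {y : Fin (m+1) → Fin n → ℝ}
    (hy : ∀ (i : Fin m) (j : Fin n), y i.castSucc j ≤ y i.succ j)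
    (j : Fin n) (i : Fin (m+1)) :
    y 0 j ≤ y i j ∧ y i j ≤ y (Fin.last m) j := by
  constructor
  · induction i using Fin.induction with
    | zero => exact le_refl _
    | succ i ih => exact ih.trans (hy i j)
  · induction i using Fin.reverseInduction with
    | last => exact le_refl _
    | cast i ih => exact (hy i j).trans ih

/-- Two members of the same GT polytope have equal row sums. -/
lemma gt_rowsum_eq {m n : ℕ} {lam mu : Fin n → ℤ} {w : Fin m → ℤ}
    {y x : Fin (m+1) → Fin n → ℝ}
    (hy : y ∈ gtPolytope m n lam mu w) (hx : x ∈ gtPolytope m n lam mu w)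
    (i : Fin (m+1)) : ∑ j, y i j = ∑ j, x i j := by
  obtain ⟨-, hy0, -, hyw⟩ := hy
  obtain ⟨-, hx0, -, hxw⟩ := hx
  induction i using Fin.induction with
  | zero => simp [hy0, hx0]
  | succ i ih =>
    have h1 := hyw i
    have h2 := hxw i
    linarith

/-- For a hook shape `λ = (h,1,…,1)`, `μ = 0`, and any nonnegative weight `w`
with total sum `h + l - 1`, every integral point of `P_{λ/μ,w}` is an extreme
point of `P_{λ/μ,w}`. -/
theorem statement1 (h l : ℕ) (hh : 1 ≤ h) (hl : 1 ≤ l)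
    (lam : Fin l → ℤ)
    (hlam0 : lam ⟨0, hl⟩ = (h : ℤ))
    (hlam1 : ∀ i : Fin l, (i : ℕ) ≠ 0 → lam i = 1)
    (m : ℕ) (w : Fin m → ℤ) (hw : ∀ i, 0 ≤ w i)
    (hsum : ∑ i, w i = (h : ℤ) + (l : ℤ) - 1)
    (x : Fin (m + 1) → Fin l → ℝ)
    (hx : x ∈ gtPolytope m l lam (fun _ => 0) w)
    (hint : ∀ i j, ∃ z : ℤ, x i j = z) :
    x ∈ Set.extremePoints ℝ (gtPolytope m l lam (fun _ => 0) w) := by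
  refine ⟨hx, ?_⟩
  intro y hy z hz hseg
  obtain ⟨a, b, ha, hb, hab, habx⟩ := hseg
  -- bounds 0 ≤ u i j ≤ 1 for any member u and column j ≠ 0
  have bounds : ∀ u ∈ gtPolytope m l lam (fun _ => 0) w,
      ∀ (i : Fin (m+1)) (j : Fin l), (j : ℕ) ≠ 0 → 0 ≤ u i j ∧ u i j ≤ 1 := by
    intro u hu i j hj
    obtain ⟨⟨hmono, -⟩, hu0, hutop, -⟩ := hu
    have hm := gt_mono_aux hmono j i
    have h0 : u 0 j = 0 := by simpa using hu0 j
    have h1 : u (Fin.last m) j = 1 := by rw [hutop j, hlam1 j hj]; norm_num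
    constructor
    · rw [← h0]; exact hm.1
    · rw [← h1]; exact hm.2
  -- key: columns j ≠ 0 are rigid
  have key : ∀ (i : Fin (m+1)) (j : Fin l), (j : ℕ) ≠ 0 →
      y i j = x i j ∧ z i j = x i j := by
    intro i j hj
    obtain ⟨hy0, hy1⟩ := bounds y hy i j hj
    obtain ⟨hz0, hz1⟩ := bounds z hz i j hj
    obtain ⟨hx0, hx1⟩ := bounds x hx i j hj
    have hcomb : a * y i j + b * z i j = x i j := by
      have := congrFun (congrFun habx i) j
      simpa using this
    obtain ⟨t, ht⟩ := hint i j
    have ht01 : t = 0 ∨ t = 1 := by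
      have h0 : (0 : ℝ) ≤ t := by rw [← ht]; exact hx0
      have h1 : (t : ℝ) ≤ 1 := by rw [← ht]; exact hx1
      have h0' : (0 : ℤ) ≤ t := by exact_mod_cast h0
      have h1' : t ≤ 1 := by exact_mod_cast h1
      omega
    rcases ht01 with rfl | rfl
    · have hx' : x i j = 0 := by rw [ht]; norm_num
      rw [hx'] at hcomb ⊢
      constructor <;> nlinarith
    · have hx' : x i j = 1 := by rw [ht]; norm_num
      rw [hx'] at hcomb ⊢
      constructor <;> nlinarith
  -- column 0 is determined by row sums
  have col0 : ∀ (u : Fin (m+1) → Fin l → ℝ), u ∈ gtPolytope m l lam (fun _ => 0) w →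
      (∀ (i : Fin (m+1)) (j : Fin l), (j : ℕ) ≠ 0 → u i j = x i j) →
      u = x := by
    intro u hu hcols
    funext i j
    by_cases hj : (j : ℕ) = 0
    · have hj0 : j = ⟨0, hl⟩ := Fin.ext hj
      subst hj0
      have hrs := gt_rowsum_eq hu hx i
      rw [← Finset.add_sum_erase _ _ (Finset.mem_univ (⟨0, hl⟩ : Fin l)),
          ← Finset.add_sum_erase _ (fun j => x i j) (Finset.mem_univ (⟨0, hl⟩ : Fin l))] at hrs
      have hrest : ∑ k ∈ Finset.univ.erase (⟨0, hl⟩ : Fin l), u i k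
          = ∑ k ∈ Finset.univ.erase (⟨0, hl⟩ : Fin l), x i k := by
        refine Finset.sum_congr rfl fun k hk => ?_
        have hk0 : (k : ℕ) ≠ 0 := fun hc => (Finset.ne_of_mem_erase hk) (Fin.ext hc)
        exact hcols i k hk0
      linarith
    · exact hcols i j hj
  exact col0 y hy (fun i j hj => (key i j hj).1)
end

section
/- Suppose μ_i ≥ λ_{i+1} for all 1 ≤ i < n (that is, the skew shape λ/μ is a disjoint union of rows). Then for every nonnegative integer vector w with Σw_i = |λ|−|μ|, the Gelfand–Tsetlin polytope P_{λ/μ,w} is integral: every extreme point of P_{λ/μ,w} has all entries in ℤ. -/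
open Finset

lemma gts_sum_int {α : Type*} (s : Finset α) (f : α → ℝ)
    (h : ∀ a ∈ s, ∃ z : ℤ, f a = z) : ∃ z : ℤ, ∑ a ∈ s, f a = z := by
  classical
  induction s using Finset.induction_on with
  | empty => exact ⟨0, by simp⟩
  | insert _ _ ha ih =>
    obtain ⟨z1, hz1⟩ := h _ (Finset.mem_insert_self _ _)
    obtain ⟨z2, hz2⟩ := ih (fun a haa => h a (Finset.mem_insert_of_mem haa))
    exact ⟨z1 + z2, by rw [Finset.sum_insert ha, hz1, hz2]; push_cast; ring⟩

lemma gts_telescope {m n : ℕ} (x : Fin (m+1) → Fin n → ℝ) (j : Fin n) :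
    ∀ (k : ℕ) (hk : k < m+1), x ⟨k, hk⟩ j
      = x 0 j + ∑ i' : Fin m, if (i' : ℕ) < k then (x i'.succ j - x i'.castSucc j) else 0 := by
  intro k
  induction k with
  | zero => intro hk; simp
  | succ k ih =>
    intro hk
    have hkm : k < m := by omega
    have hsplit : ∀ i' : Fin m, (if (i' : ℕ) < k+1 then (x i'.succ j - x i'.castSucc j) else 0)
        = (if (i' : ℕ) < k then (x i'.succ j - x i'.castSucc j) else 0)
          + (if i' = ⟨k, hkm⟩ then (x i'.succ j - x i'.castSucc j) else 0) := by
      intro i'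
      by_cases h1 : (i' : ℕ) < k
      · rw [if_pos (by omega), if_pos h1, if_neg (by simp [Fin.ext_iff]; omega), add_zero]
      · by_cases h2 : (i' : ℕ) = k
        · rw [if_pos (by omega), if_neg h1, if_pos (Fin.ext h2), zero_add]
        · rw [if_neg (by omega), if_neg h1, if_neg (by simp [Fin.ext_iff]; omega), add_zero]
    rw [Finset.sum_congr rfl (fun i' _ => hsplit i'), Finset.sum_add_distrib,
      Finset.sum_ite_eq' Finset.univ (⟨k, hkm⟩ : Fin m), if_pos (Finset.mem_univ _)]
    have h1 : x (⟨k, hkm⟩ : Fin m).succ j = x ⟨k+1, hk⟩ j := rfl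
    have h2 : x (⟨k, hkm⟩ : Fin m).castSucc j = x ⟨k, by omega⟩ j := rfl
    have := ih (by omega)
    rw [h1, h2]
    linarith

lemma gts_colmono {m n : ℕ} (x : Fin (m+1) → Fin n → ℝ) (j : Fin n)
    (hcol : ∀ i : Fin m, x i.castSucc j ≤ x i.succ j) :
    ∀ (k l : ℕ) (hk : k < m+1) (hl : l < m+1), k ≤ l → x ⟨k, hk⟩ j ≤ x ⟨l, hl⟩ j := by
  intro k l
  induction l with
  | zero =>
    intro hk hl hkl
    have hk0 : (⟨k, hk⟩ : Fin (m+1)) = ⟨0, hl⟩ := Fin.ext (show k = 0 by omega)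
    rw [hk0]
  | succ l ih =>
    intro hk hl hkl
    by_cases h : k = l + 1
    · subst h; exact le_rfl
    · have hlm : l < m := by omega
      calc x ⟨k, hk⟩ j ≤ x ⟨l, by omega⟩ j := ih hk (by omega) (by omega)
        _ ≤ x ⟨l+1, hl⟩ j := hcol ⟨l, hlm⟩

lemma gts_sum_fiber_fst {m n : ℕ} (F : Finset (Fin m × Fin n)) (g : Fin m × Fin n → ℝ)
    (h0 : ∀ c, c ∉ F → g c = 0) (i : Fin m) :
    ∑ c : ↥F, (if (c : Fin m × Fin n).1 = i then g ↑c else 0) = ∑ j, g (i, j) := by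
  classical
  rw [Finset.sum_coe_sort F (fun c => if c.1 = i then g c else 0)]
  rw [Finset.sum_subset (Finset.subset_univ F)
    (fun c _ hc => by split_ifs with h; exacts [h0 c hc, rfl])]
  rw [Fintype.sum_prod_type]
  have h1 : ∀ a : Fin m, (∑ b, if a = i then g (a, b) else 0)
      = if a = i then (∑ b, g (a, b)) else 0 := fun a => by split_ifs <;> simp
  rw [Finset.sum_congr rfl (fun a _ => h1 a), Finset.sum_ite_eq' Finset.univ i,
    if_pos (Finset.mem_univ _)]

lemma gts_sum_fiber_snd {m n : ℕ} (F : Finset (Fin m × Fin n)) (g : Fin m × Fin n → ℝ)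
    (h0 : ∀ c, c ∉ F → g c = 0) (j : Fin n) :
    ∑ c : ↥F, (if (c : Fin m × Fin n).2 = j then g ↑c else 0) = ∑ i, g (i, j) := by
  classical
  rw [Finset.sum_coe_sort F (fun c => if c.2 = j then g c else 0)]
  rw [Finset.sum_subset (Finset.subset_univ F)
    (fun c _ hc => by split_ifs with h; exacts [h0 c hc, rfl])]
  rw [Fintype.sum_prod_type]
  exact Finset.sum_congr rfl (fun a _ => by
    rw [Finset.sum_ite_eq' Finset.univ j, if_pos (Finset.mem_univ _)])

set_option maxHeartbeats 1000000
/-- If the skew shape `λ/μ` is a disjoint union of rows (`μ_i ≥ λ_{i+1}`), then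
for every nonnegative weight `w` with total sum `|λ|-|μ|` the GT-polytope
`P_{λ/μ,w}` is integral: every extreme point has integer entries. -/
theorem statement2 (n : ℕ) (hn : 1 ≤ n) (lam mu : Fin n → ℤ)
    (hlam : Antitone lam) (hmu : Antitone mu)
    (hmu0 : ∀ j, 0 ≤ mu j) (hge : ∀ j, mu j ≤ lam j)
    (hdisj : ∀ i : Fin n, ∀ h : (i : ℕ) + 1 < n, lam ⟨(i : ℕ) + 1, h⟩ ≤ mu i)
    (m : ℕ) (w : Fin m → ℤ) (hw : ∀ i, 0 ≤ w i)
    (hsum : ∑ i, w i = ∑ j, lam j - ∑ j, mu j)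
    (x : Fin (m + 1) → Fin n → ℝ)
    (hx : x ∈ Set.extremePoints ℝ (gtPolytope m n lam mu w)) :
    ∀ i j, ∃ z : ℤ, x i j = z := by
  classical
  by_contra hcon
  push_neg at hcon
  obtain ⟨i₀, j₀, hfrac⟩ := hcon
  rw [mem_extremePoints] at hx
  obtain ⟨hxmem, hext⟩ := hx
  obtain ⟨⟨hcol, hdiag⟩, hbot, htop, hrow⟩ := hxmem
  set y : Fin m → Fin n → ℝ := fun i j => x i.succ j - x i.castSucc j with hydef
  have hy0 : ∀ i j, 0 ≤ y i j := fun i j => sub_nonneg.2 (hcol i j)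
  have hrowsum : ∀ i, ∑ j, y i j = (w i : ℝ) := by
    intro i
    rw [show (∑ j, y i j) = (∑ j, x i.succ j) - ∑ j, x i.castSucc j from
      Finset.sum_sub_distrib _ _]
    exact hrow i
  have hcolsum : ∀ j, ∑ i, y i j = (lam j : ℝ) - mu j := by
    intro j
    have ht := gts_telescope x j m (by omega)
    have hlast : (⟨m, by omega⟩ : Fin (m+1)) = Fin.last m := rfl
    rw [hlast, htop j, hbot j] at ht
    rw [Finset.sum_congr rfl (fun (i' : Fin m) (_ : i' ∈ (Finset.univ : Finset (Fin m))) =>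
      (if_pos i'.isLt : (if ((i' : ℕ) < m) then (x i'.succ j - x i'.castSucc j) else 0)
        = x i'.succ j - x i'.castSucc j))] at ht
    simp only [hydef]
    linarith
  set F : Finset (Fin m × Fin n) :=
    Finset.univ.filter (fun c => ¬∃ z : ℤ, y c.1 c.2 = z) with hFdef
  have hmemF : ∀ c : Fin m × Fin n, c ∈ F ↔ ¬∃ z : ℤ, y c.1 c.2 = z := by
    intro c; rw [hFdef]; simp
  have hF : F.Nonempty := by
    by_contra hne
    rw [Finset.not_nonempty_iff_eq_empty] at hne
    have hall : ∀ i' : Fin m, ∃ z : ℤ, y i' j₀ = z := by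
      intro i'
      by_contra hc
      have : (i', j₀) ∈ F := (hmemF _).2 hc
      rw [hne] at this
      exact absurd this (Finset.notMem_empty _)
    have ht := gts_telescope x j₀ (i₀ : ℕ) i₀.isLt
    obtain ⟨z, hz⟩ := gts_sum_int Finset.univ
      (fun i' : Fin m => if (i' : ℕ) < (i₀ : ℕ) then (x i'.succ j₀ - x i'.castSucc j₀) else 0)
      (by
        intro i' _
        by_cases h : (i' : ℕ) < (i₀ : ℕ)
        · obtain ⟨z, hz⟩ := hall i'
          exact ⟨z, by rw [if_pos h]; exact hz⟩
        · exact ⟨0, by rw [if_neg h]; simp⟩)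
    refine hfrac (mu j₀ + z) ?_
    rw [hbot j₀, hz] at ht
    have he : (⟨(i₀ : ℕ), i₀.isLt⟩ : Fin (m+1)) = i₀ := rfl
    rw [he] at ht
    rw [ht]; push_cast; ring
  have hdegrow : ∀ i : Fin m, (F.filter (fun c => c.1 = i)).card ≠ 1 := by
    intro i h1
    obtain ⟨c, hc⟩ := Finset.card_eq_one.1 h1
    have hcself : c ∈ F.filter (fun c => c.1 = i) := by rw [hc]; exact Finset.mem_singleton_self c
    obtain ⟨hcF, hci⟩ := Finset.mem_filter.1 hcself
    have hint : ∀ j ∈ Finset.univ.erase c.2, ∃ z : ℤ, y i j = z := by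
      intro j hj
      by_contra hcj
      have hmm : (i, j) ∈ F.filter (fun c => c.1 = i) :=
        Finset.mem_filter.2 ⟨(hmemF _).2 hcj, rfl⟩
      rw [hc, Finset.mem_singleton] at hmm
      exact (Finset.mem_erase.1 hj).1 (by rw [← hmm])
    obtain ⟨Z, hZ⟩ := gts_sum_int _ _ hint
    have hsplit : y i c.2 + ∑ j ∈ Finset.univ.erase c.2, y i j = ∑ j, y i j :=
      Finset.add_sum_erase Finset.univ (fun j => y i j) (Finset.mem_univ c.2)
    have hyc : y i c.2 = ((w i - Z : ℤ) : ℝ) := by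
      push_cast
      rw [← hrowsum i, ← hsplit, hZ]
      ring
    exact ((hmemF c).1 hcF) ⟨w i - Z, by rw [hci]; exact hyc⟩
  have hdegcol : ∀ j : Fin n, (F.filter (fun c => c.2 = j)).card ≠ 1 := by
    intro j h1
    obtain ⟨c, hc⟩ := Finset.card_eq_one.1 h1
    have hcself : c ∈ F.filter (fun c => c.2 = j) := by rw [hc]; exact Finset.mem_singleton_self c
    obtain ⟨hcF, hcj⟩ := Finset.mem_filter.1 hcself
    have hint : ∀ i ∈ Finset.univ.erase c.1, ∃ z : ℤ, y i j = z := by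
      intro i hi
      by_contra hci
      have hmm : (i, j) ∈ F.filter (fun c => c.2 = j) :=
        Finset.mem_filter.2 ⟨(hmemF _).2 hci, rfl⟩
      rw [hc, Finset.mem_singleton] at hmm
      exact (Finset.mem_erase.1 hi).1 (by rw [← hmm])
    obtain ⟨Z, hZ⟩ := gts_sum_int _ _ hint
    have hsplit : y c.1 j + ∑ i ∈ Finset.univ.erase c.1, y i j = ∑ i, y i j :=
      Finset.add_sum_erase Finset.univ (fun i => y i j) (Finset.mem_univ c.1)
    have hyc : y c.1 j = ((lam j - mu j - Z : ℤ) : ℝ) := by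
      push_cast
      rw [← hcolsum j, ← hsplit, hZ]
      ring
    exact ((hmemF c).1 hcF) ⟨lam j - mu j - Z, by rw [hcj]; exact hyc⟩
  set T : Finset (Fin m) := F.image Prod.fst with hTdef
  set C : Finset (Fin n) := F.image Prod.snd with hCdef
  have hcardT : 2 * T.card ≤ F.card := by
    rw [Finset.card_eq_sum_card_fiberwise
      (fun c hcF => Finset.mem_image_of_mem Prod.fst hcF : ∀ c ∈ F, c.1 ∈ T)]
    calc 2 * T.card = ∑ _i ∈ T, 2 := by rw [Finset.sum_const]; ring
      _ ≤ ∑ i ∈ T, (F.filter (fun c => c.1 = i)).card := by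
          apply Finset.sum_le_sum
          intro i hi
          obtain ⟨c, hcF, hci⟩ := Finset.mem_image.1 hi
          have hne : (F.filter (fun c => c.1 = i)).Nonempty :=
            ⟨c, Finset.mem_filter.2 ⟨hcF, hci⟩⟩
          have h2 := Finset.card_pos.2 hne
          have h3 := hdegrow i
          omega
  have hcardC : 2 * C.card ≤ F.card := by
    rw [Finset.card_eq_sum_card_fiberwise
      (fun c hcF => Finset.mem_image_of_mem Prod.snd hcF : ∀ c ∈ F, c.2 ∈ C)]
    calc 2 * C.card = ∑ _j ∈ C, 2 := by rw [Finset.sum_const]; ring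
      _ ≤ ∑ j ∈ C, (F.filter (fun c => c.2 = j)).card := by
          apply Finset.sum_le_sum
          intro j hj
          obtain ⟨c, hcF, hcj⟩ := Finset.mem_image.1 hj
          have hne : (F.filter (fun c => c.2 = j)).Nonempty :=
            ⟨c, Finset.mem_filter.2 ⟨hcF, hcj⟩⟩
          have h2 := Finset.card_pos.2 hne
          have h3 := hdegcol j
          omega
  obtain ⟨jc, hjc⟩ : C.Nonempty := hF.image _
  set C' : Finset (Fin n) := C.erase jc with hC'def
  set L : (↥F → ℝ) →ₗ[ℝ] ((↥T → ℝ) × (↥C' → ℝ)) :=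
    { toFun := fun d =>
        (fun i => ∑ c : ↥F, if (c : Fin m × Fin n).1 = ↑i then d c else 0,
         fun j => ∑ c : ↥F, if (c : Fin m × Fin n).2 = ↑j then d c else 0),
      map_add' := by
        intro a b
        refine Prod.ext ?_ ?_ <;> funext t <;> simp only [Pi.add_apply, Prod.fst_add,
          Prod.snd_add] <;> rw [← Finset.sum_add_distrib] <;>
          exact Finset.sum_congr rfl (fun c _ => by split_ifs <;> simp)
      map_smul' := by
        intro r a
        refine Prod.ext ?_ ?_ <;> funext t <;> simp only [Pi.smul_apply, smul_eq_mul,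
          RingHom.id_apply, Prod.smul_fst, Prod.smul_snd] <;> rw [Finset.mul_sum] <;>
          exact Finset.sum_congr rfl (fun c _ => by split_ifs <;> simp) } with hLdef
  have hltrank : Module.finrank ℝ ((↥T → ℝ) × (↥C' → ℝ)) < Module.finrank ℝ (↥F → ℝ) := by
    rw [Module.finrank_prod, Module.finrank_pi, Module.finrank_pi, Module.finrank_pi,
      Fintype.card_coe, Fintype.card_coe, Fintype.card_coe]
    have h1 : C'.card = C.card - 1 := Finset.card_erase_of_mem hjc
    have h2 : 1 ≤ C.card := Finset.card_pos.2 ⟨jc, hjc⟩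
    omega
  have hnotinj : ¬Function.Injective L := fun hinj =>
    absurd (LinearMap.finrank_le_finrank_of_injective hinj) (not_le.2 hltrank)
  rw [← LinearMap.ker_eq_bot] at hnotinj
  obtain ⟨d, hdker, hdne⟩ := (Submodule.ne_bot_iff _).1 hnotinj
  have hLd : L d = 0 := hdker
  set D : Fin m → Fin n → ℝ :=
    fun i j => if h : (i, j) ∈ F then d ⟨(i, j), h⟩ else 0 with hDdef
  have hDF : ∀ i j, (i, j) ∉ F → D i j = 0 := by
    intro i j h; rw [hDdef]; exact dif_neg h
  have hDd : ∀ c : ↥F, D (c : Fin m × Fin n).1 (c : Fin m × Fin n).2 = d c := by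
    intro c
    rw [hDdef]
    exact dif_pos c.2
  have hDrow : ∀ i, ∑ j, D i j = 0 := by
    intro i
    by_cases hiT : i ∈ T
    · have hswap := gts_sum_fiber_fst F (fun c => D c.1 c.2)
        (fun c hc => hDF c.1 c.2 hc) i
      rw [← hswap]
      have hcongr : ∀ c : ↥F,
          (if (c : Fin m × Fin n).1 = i then D (c : Fin m × Fin n).1 (c : Fin m × Fin n).2 else 0)
          = (if (c : Fin m × Fin n).1 = i then d c else 0) := by
        intro c; split_ifs with h
        · exact hDd c
        · rfl
      rw [Finset.sum_congr rfl (fun c _ => hcongr c)]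
      have : (L d).1 ⟨i, hiT⟩ = 0 := by rw [hLd]; rfl
      exact this
    · apply Finset.sum_eq_zero
      intro j _
      apply hDF
      intro hmemf
      exact hiT (Finset.mem_image_of_mem Prod.fst hmemf)
  have hDcolC' : ∀ j, j ≠ jc → ∑ i, D i j = 0 := by
    intro j hjne
    by_cases hjC : j ∈ C
    · have hjC' : j ∈ C' := Finset.mem_erase.2 ⟨hjne, hjC⟩
      have hswap := gts_sum_fiber_snd F (fun c => D c.1 c.2)
        (fun c hc => hDF c.1 c.2 hc) j
      rw [← hswap]
      have hcongr : ∀ c : ↥F,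
          (if (c : Fin m × Fin n).2 = j then D (c : Fin m × Fin n).1 (c : Fin m × Fin n).2 else 0)
          = (if (c : Fin m × Fin n).2 = j then d c else 0) := by
        intro c; split_ifs with h
        · exact hDd c
        · rfl
      rw [Finset.sum_congr rfl (fun c _ => hcongr c)]
      have : (L d).2 ⟨j, hjC'⟩ = 0 := by rw [hLd]; rfl
      exact this
    · apply Finset.sum_eq_zero
      intro i _
      apply hDF
      intro hmemf
      exact hjC (Finset.mem_image_of_mem Prod.snd hmemf)
  have hDcol : ∀ j, ∑ i, D i j = 0 := by
    intro j
    by_cases hj : j = jc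
    · subst hj
      have htot : ∑ i, ∑ j', D i j' = 0 := Finset.sum_eq_zero (fun i _ => hDrow i)
      rw [Finset.sum_comm] at htot
      have hsplit := Finset.add_sum_erase Finset.univ (fun j' => ∑ i, D i j') (Finset.mem_univ j)
      have hrest : ∑ j' ∈ Finset.univ.erase j, ∑ i, D i j' = 0 :=
        Finset.sum_eq_zero (fun j' hjme => hDcolC' j' (Finset.mem_erase.1 hjme).1)
      rw [hrest] at hsplit
      rw [htot] at hsplit
      linarith
    · exact hDcolC' j hj
  obtain ⟨c₁, hc₁⟩ := Function.ne_iff.1 hdne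
  obtain ⟨⟨i₁, j₁⟩, hc₁F⟩ := c₁
  have hD₁ : D i₁ j₁ ≠ 0 := by
    rw [hDdef]
    dsimp only
    rw [dif_pos hc₁F]
    simpa using hc₁
  set ε : ℝ := F.inf' hF (fun c => y c.1 c.2 / (|D c.1 c.2| + 1)) with hεdef
  have hypos : ∀ c ∈ F, 0 < y c.1 c.2 := by
    intro c hcF
    rcases lt_or_eq_of_le (hy0 c.1 c.2) with h | h
    · exact h
    · exact absurd ⟨0, by simp [← h]⟩ ((hmemF c).1 hcF)
  have hε : 0 < ε := by
    rw [hεdef, Finset.lt_inf'_iff]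
    intro c hcF
    exact div_pos (hypos c hcF) (by positivity)
  have hbound : ∀ i j, ε * |D i j| ≤ y i j := by
    intro i j
    by_cases hij : (i, j) ∈ F
    · have h1 : ε ≤ y i j / (|D i j| + 1) := by
        rw [hεdef]
        exact Finset.inf'_le _ hij
      have h2 : (0 : ℝ) < |D i j| + 1 := by positivity
      have h3 : ε * (|D i j| + 1) ≤ y i j := by
        calc ε * (|D i j| + 1) ≤ (y i j / (|D i j| + 1)) * (|D i j| + 1) :=
              mul_le_mul_of_nonneg_right h1 h2.le
          _ = y i j := div_mul_cancel₀ _ (ne_of_gt h2)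
      have h4 : ε * (|D i j| + 1) = ε * |D i j| + ε := by ring
      linarith [hε.le]
    · rw [hDF i j hij]
      simpa using hy0 i j
  set S : Fin (m+1) → Fin n → ℝ :=
    fun i j => ∑ i' : Fin m, if (i' : ℕ) < (i : ℕ) then D i' j else 0 with hSdef
  have hS0 : ∀ j, S 0 j = 0 := by intro j; rw [hSdef]; simp
  have hSlast : ∀ j, S (Fin.last m) j = 0 := by
    intro j
    rw [hSdef]
    simp only [Fin.val_last]
    rw [Finset.sum_congr rfl (fun (i' : Fin m) (_ : i' ∈ (Finset.univ : Finset (Fin m))) =>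
      (if_pos i'.isLt : (if ((i' : ℕ) < m) then D i' j else 0) = D i' j))]
    exact hDcol j
  have hSstep : ∀ (i : Fin m) (j : Fin n), S i.succ j - S i.castSucc j = D i j := by
    intro i j
    rw [hSdef]
    simp only [Fin.val_succ, Fin.coe_castSucc]
    rw [← Finset.sum_sub_distrib]
    have hterm : ∀ i' : Fin m,
        ((if (i' : ℕ) < (i : ℕ) + 1 then D i' j else 0) -
          (if (i' : ℕ) < (i : ℕ) then D i' j else 0)) = if i' = i then D i' j else 0 := by
      intro i'
      by_cases h1 : (i' : ℕ) < (i : ℕ)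
      · rw [if_pos (by omega), if_pos h1, if_neg (by simp [Fin.ext_iff]; omega)]; ring
      · by_cases h2 : (i' : ℕ) = (i : ℕ)
        · rw [if_pos (by omega), if_neg h1, if_pos (Fin.ext h2)]; ring
        · rw [if_neg (by omega), if_neg h1, if_neg (by simp [Fin.ext_iff]; omega)]; ring
    rw [Finset.sum_congr rfl (fun i' _ => hterm i'),
      Finset.sum_ite_eq' Finset.univ i, if_pos (Finset.mem_univ _)]
  have hmem : ∀ t : ℝ, |t| ≤ ε →
      (fun i j => x i j + t * S i j) ∈ gtPolytope m n lam mu w := by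
    intro t ht
    have hcol' : ∀ (i : Fin m) (j : Fin n),
        (x i.castSucc j + t * S i.castSucc j) ≤ (x i.succ j + t * S i.succ j) := by
      intro i j
      have h1 : |t * D i j| ≤ ε * |D i j| := by
        rw [abs_mul]; exact mul_le_mul_of_nonneg_right ht (abs_nonneg _)
      have h3 : -(t * D i j) ≤ ε * |D i j| := by
        have := neg_abs_le (t * D i j); linarith
      have h2 := hbound i j
      have h5 : y i j = x i.succ j - x i.castSucc j := rfl
      have h7 : t * S i.succ j - t * S i.castSucc j = t * D i j := by
        rw [← mul_sub, hSstep i j]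
      linarith
    refine ⟨⟨hcol', ?_⟩, ?_, ?_, ?_⟩
    · intro i j h
      have h1 : x 0 j + t * S 0 j ≤ x i.castSucc j + t * S i.castSucc j := by
        have := gts_colmono (fun i j => x i j + t * S i j) j (fun i' => hcol' i' j)
          0 (i.castSucc : ℕ) (by omega) i.castSucc.isLt (Nat.zero_le _)
        exact this
      have h2 : x i.succ ⟨(j : ℕ) + 1, h⟩ + t * S i.succ ⟨(j : ℕ) + 1, h⟩ ≤
          x (Fin.last m) ⟨(j : ℕ) + 1, h⟩ + t * S (Fin.last m) ⟨(j : ℕ) + 1, h⟩ := by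
        have := gts_colmono (fun i j => x i j + t * S i j) ⟨(j : ℕ) + 1, h⟩
          (fun i' => hcol' i' _) (i.succ : ℕ) m i.succ.isLt (by omega) (by omega)
        exact this
      have h3 : ((lam ⟨(j : ℕ) + 1, h⟩ : ℤ) : ℝ) ≤ ((mu j : ℤ) : ℝ) := Int.cast_le.2 (hdisj j h)
      have h4 := hS0 j
      have h5 := hSlast ⟨(j : ℕ) + 1, h⟩
      have h6 := hbot j
      have h7 := htop ⟨(j : ℕ) + 1, h⟩
      simp only at h1 h2 ⊢
      rw [h4] at h1
      rw [h5] at h2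
      rw [h6] at h1
      rw [h7] at h2
      linarith
    · intro j
      simp only
      rw [hS0 j, hbot j]
      ring
    · intro j
      simp only
      rw [hSlast j, htop j]
      ring
    · intro i
      simp only
      rw [← Finset.sum_sub_distrib]
      have h7 : ∀ j : Fin n, (x i.succ j + t * S i.succ j) - (x i.castSucc j + t * S i.castSucc j)
          = y i j + t * D i j := by
        intro j
        have h8 : t * S i.succ j - t * S i.castSucc j = t * D i j := by
          rw [← mul_sub, hSstep i j]
        have h5 : y i j = x i.succ j - x i.castSucc j := rfl
        linarith
      rw [Finset.sum_congr rfl (fun j _ => h7 j), Finset.sum_add_distrib]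
      rw [show (∑ j, t * D i j) = t * ∑ j, D i j from (Finset.mul_sum _ _ _).symm]
      rw [hDrow i, mul_zero, add_zero]
      exact hrowsum i
  have hp1 := hmem ε (le_of_eq (abs_of_pos hε))
  have hp2 := hmem (-ε) (le_of_eq (by rw [abs_neg, abs_of_pos hε]))
  have hseg : x ∈ openSegment ℝ (fun i j => x i j + ε * S i j)
      (fun i j => x i j + (-ε) * S i j) := by
    refine ⟨1/2, 1/2, by norm_num, by norm_num, by norm_num, ?_⟩
    funext i
    funext j
    simp only [Pi.add_apply, Pi.smul_apply, smul_eq_mul]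
    ring
  obtain ⟨heq, -⟩ := hext _ hp1 _ hp2 hseg
  have e1 : x i₁.succ j₁ + ε * S i₁.succ j₁ = x i₁.succ j₁ := congrFun (congrFun heq i₁.succ) j₁
  have e2 : x i₁.castSucc j₁ + ε * S i₁.castSucc j₁ = x i₁.castSucc j₁ :=
    congrFun (congrFun heq i₁.castSucc) j₁
  have hεD : ε * D i₁ j₁ = 0 := by
    rw [← hSstep i₁ j₁, mul_sub]
    linarith
  rcases mul_eq_zero.1 hεD with h | h
  · exact absurd h (ne_of_gt hε)
  · exact hD₁ h
end

section
/- Let λ = (h,1,1,…,1) ∈ ℤ^l be a hook partition (h ≥ 1, l ≥ 1) and μ = (0,…,0), and let 1 = (1,…,1) be the weight with h+l−1 entries. Then P_{λ/μ,1} has the integer decomposition property: for every integer k ≥ 1, every integral GT-pattern of shape kλ/kμ and weight k·1 is an entrywise sum of k integral GT-patterns of shape λ/μ and weight 1. -/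
open Finset

/-- `P_{λ/μ,w}` has the integer decomposition property: for every `k ≥ 1`,
every integral GT-pattern of shape `kλ/kμ` and weight `kw` is an entrywise sum
of `k` integral GT-patterns of shape `λ/μ` and weight `w`. -/
def HasIDP (m n : ℕ) (lam mu : Fin n → ℤ) (w : Fin m → ℤ) : Prop :=
  ∀ k : ℕ, 1 ≤ k →
    ∀ x ∈ gtPolytope m n (fun j => (k : ℤ) * lam j) (fun j => (k : ℤ) * mu j)
        (fun i => (k : ℤ) * w i),
      (∀ i j, ∃ z : ℤ, x i j = z) →
      ∃ y : Fin k → Fin (m + 1) → Fin n → ℝ,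
        (∀ t, y t ∈ gtPolytope m n lam mu w) ∧
        (∀ t i j, ∃ z : ℤ, y t i j = z) ∧
        ∀ i j, x i j = ∑ t, y t i j

lemma clamp_sum' (k : ℕ) (a : ℤ) (ha : 0 ≤ a) :
    ∑ t ∈ Finset.range k, max 0 (min 1 (a - t)) = min a k := by
  induction k with
  | zero => simp; omega
  | succ k ih => rw [Finset.sum_range_succ, ih]; push_cast; omega

lemma main_aux (m n k h : ℕ) (hk : 1 ≤ k) (hn : 1 ≤ n) (hm : 1 ≤ m)
    (hmn : m + 1 = h + n)
    (Z : ℕ → ℕ → ℤ)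
    (Hhigh : ∀ i j, n ≤ j → Z i j = 0)
    (H1 : ∀ i j, Z i j ≤ Z (i+1) j)
    (H2 : ∀ i j, Z (i+1) (j+1) ≤ Z i j)
    (H3 : ∀ j, Z 0 j = 0)
    (H4 : ∀ j, 1 ≤ j → j < n → Z m j = k)
    (H5 : ∀ i, i < m → (∑ j ∈ range n, Z (i+1) j) - ∑ j ∈ range n, Z i j = k)
    (Hstab : ∀ i j, m ≤ i → Z i j = Z m j) :
    ∃ Y : ℕ → ℕ → ℕ → ℤ,
      (∀ t, t < k → ∀ i j, Y t i j ≤ Y t (i+1) j) ∧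
      (∀ t, t < k → ∀ i j, j + 1 < n → Y t (i+1) (j+1) ≤ Y t i j) ∧
      (∀ t, t < k → ∀ j, Y t 0 j = 0) ∧
      (∀ t, t < k → Y t m 0 = h) ∧
      (∀ t, t < k → ∀ j, 1 ≤ j → j < n → Y t m j = 1) ∧
      (∀ t, t < k → ∀ i, ∑ j ∈ range n, Y t i j = i) ∧
      (∀ i j, i ≤ m → j < n → ∑ t ∈ range k, Y t i j = Z i j) := by
  -- basic derived facts
  have L1 : ∀ i j, 0 ≤ Z i j := by
    intro i j
    induction i with
    | zero => exact (H3 j).ge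
    | succ i ih => exact ih.trans (H1 i j)
  have L2 : ∀ i j, Z i (j+1) ≤ Z i j := by
    intro i j
    cases i with
    | zero => rw [H3, H3]
    | succ i => exact (H2 i j).trans (H1 i j)
  have L2' : ∀ i j j', j ≤ j' → Z i j' ≤ Z i j := by
    intro i j j' hjj
    induction j', hjj using Nat.le_induction with
    | base => exact le_rfl
    | succ j' _ ih => exact (L2 i j').trans ih
  have L3 : ∀ i i' j, i ≤ i' → Z i j ≤ Z i' j := by
    intro i i' j hii
    induction i', hii using Nat.le_induction with
    | base => exact le_rfl
    | succ i' _ ih => exact ih.trans (H1 i' j)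
  have L5 : ∀ i j, 1 ≤ j → Z i j ≤ k := by
    intro i j hj
    rcases lt_or_ge j n with hjn | hjn
    · rcases le_or_gt i m with him | him
      · exact (L3 i m j him).trans_eq (H4 j hj hjn)
      · rw [Hstab i j him.le, H4 j hj hjn]
    · rw [Hhigh i j hjn]; positivity
  have L6 : ∀ i j, 1 ≤ j → i ≤ j → Z i j ≤ 0 := by
    intro i
    induction i with
    | zero => intro j _ _; exact (H3 j).le
    | succ i ih =>
      intro j hj hij
      obtain ⟨j', rfl⟩ : ∃ j', j = j' + 1 := ⟨j - 1, by omega⟩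
      rcases Nat.eq_zero_or_pos j' with rfl | hj'
      · have h0 : i = 0 := by omega
        subst h0
        exact (H2 0 0).trans (H3 0).le
      · exact (H2 i j').trans (ih j' hj' (by omega))
  have L7 : ∀ i, i ≤ m → ∑ j ∈ range n, Z i j = (k : ℤ) * i := by
    intro i
    induction i with
    | zero => intro _; simp [H3]
    | succ i ih =>
      intro him
      have h5 := H5 i (by omega)
      rw [ih (by omega)] at h5
      push_cast
      linarith
  -- the slices
  set B : ℕ → ℕ → ℕ → ℤ := fun t i j => max 0 (min 1 (Z i j - t)) with hBdef
  set S : ℕ → ℕ → ℤ := fun t i => ∑ j ∈ Ico 1 n, B t i j with hSdef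
  have B01 : ∀ t i j, 0 ≤ B t i j ∧ B t i j ≤ 1 := by
    intro t i j; simp only [hBdef]; omega
  have Bmono : ∀ t i j, B t i j ≤ B t (i+1) j := by
    intro t i j; have := H1 i j; simp only [hBdef]; omega
  have Bdiag : ∀ t i j, B t (i+1) (j+1) ≤ B t i j := by
    intro t i j; have := H2 i j; simp only [hBdef]; omega
  have B0 : ∀ t j, B t 0 j = 0 := by
    intro t j; have := H3 j; have ht : (0:ℤ) ≤ t := Int.natCast_nonneg t
    simp only [hBdef]; omega
  have Bzero : ∀ t i j, 1 ≤ j → i ≤ j → B t i j = 0 := by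
    intro t i j hj hij
    have := L6 i j hj hij
    have ht : (0:ℤ) ≤ t := Int.natCast_nonneg t
    simp only [hBdef]; omega
  have Btop : ∀ t, t < k → ∀ j, 1 ≤ j → j < n → B t m j = 1 := by
    intro t ht j hj hjn
    have := H4 j hj hjn
    have ht' : (t : ℤ) < k := by exact_mod_cast ht
    simp only [hBdef]; omega
  have Bsum : ∀ i j, 1 ≤ j → ∑ t ∈ range k, B t i j = Z i j := by
    intro i j hj
    simp only [hBdef]
    rw [clamp_sum' k (Z i j) (L1 i j), min_eq_left (L5 i j hj)]
  have Sstep : ∀ t i, S t (i+1) ≤ S t i + 1 := by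
    intro t i
    by_cases hex : ∃ j ∈ Ico 1 n, B t i j < B t (i+1) j
    · obtain ⟨j0, hj0, hlt0⟩ := hex
      have key : ∀ j ∈ Ico 1 n, B t (i+1) j ≤ B t i j + (if j = j0 then 1 else 0) := by
        intro j hj
        by_cases hjj : j = j0
        · subst hjj
          rw [if_pos rfl]
          have h1 := (B01 t (i+1) j).2
          have h2 := (B01 t i j).1
          omega
        · simp only [if_neg hjj, add_zero]
          by_contra hcon
          push_neg at hcon
          have hinc : ∀ a b, 1 ≤ a → a < b → B t i a < B t (i+1) a →
              B t i b < B t (i+1) b → False := by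
            intro a b ha hab hA hB
            have h1 := L1 i a
            have h2 := L1 (i+1) b
            simp only [hBdef] at hA hB
            have hZa : Z i a ≤ t := by omega
            have hZb : (t:ℤ) + 1 ≤ Z (i+1) b := by omega
            obtain ⟨b', rfl⟩ : ∃ b', b = b' + 1 := ⟨b - 1, by omega⟩
            have := (H2 i b').trans (L2' i a b' (by omega))
            omega
          rcases lt_trichotomy j j0 with hlt | heq | hgt
          · exact hinc j j0 (mem_Ico.1 hj).1 hlt hcon hlt0
          · exact hjj heq
          · exact hinc j0 j (mem_Ico.1 hj0).1 hgt hlt0 hcon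
      calc S t (i+1) ≤ ∑ j ∈ Ico 1 n, (B t i j + (if j = j0 then 1 else 0)) :=
            Finset.sum_le_sum key
        _ = S t i + 1 := by
            rw [Finset.sum_add_distrib, Finset.sum_ite_eq' _ j0, if_pos hj0]
    · push_neg at hex
      have : S t (i+1) ≤ S t i := Finset.sum_le_sum fun j hj => hex j hj
      omega
  have S0 : ∀ t, S t 0 = 0 := by
    intro t; simp only [hSdef]
    exact Finset.sum_eq_zero fun j _ => B0 t j
  have Stop : ∀ t, t < k → S t m = (n : ℤ) - 1 := by
    intro t ht
    simp only [hSdef]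
    rw [Finset.sum_congr rfl fun j hj => Btop t ht j (mem_Ico.1 hj).1 (mem_Ico.1 hj).2]
    rw [Finset.sum_const, Nat.card_Ico, nsmul_eq_mul, mul_one]
    omega
  have Sbound : ∀ t i, 1 ≤ i → S t i ≤ (i : ℤ) - 1 := by
    intro t i hi
    have hle : S t i ≤ ∑ j ∈ Ico 1 n, (if j + 1 ≤ i then (1:ℤ) else 0) :=
      Finset.sum_le_sum (by
        intro j hj
        by_cases hji : j + 1 ≤ i
        · rw [if_pos hji]; exact (B01 t i j).2
        · rw [if_neg hji, Bzero t i j (mem_Ico.1 hj).1 (by omega)])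
    have h2 : ∑ j ∈ Ico 1 n, (if j + 1 ≤ i then (1:ℤ) else 0)
        = (((Ico 1 n).filter (fun j => j + 1 ≤ i)).card : ℤ) := by
      rw [← Finset.sum_filter, Finset.sum_const, nsmul_eq_mul, mul_one]
    have h3 : ((Ico 1 n).filter (fun j => j + 1 ≤ i)).card ≤ i - 1 := by
      have hsub : (Ico 1 n).filter (fun j => j + 1 ≤ i) ⊆ Ico 1 i := by
        intro j hj
        simp only [mem_filter, mem_Ico] at *
        omega
      have := Finset.card_le_card hsub
      rw [Nat.card_Ico] at this
      exact this
    rw [h2] at hle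
    omega
  have Sbound0 : ∀ t i, S t i ≤ (i : ℤ) := by
    intro t i
    rcases Nat.eq_zero_or_pos i with rfl | hi
    · simp [S0]
    · have := Sbound t i hi; omega
  -- the decomposition
  refine ⟨fun t i j => if j = 0 then (i : ℤ) - S t i else B t i j, ?_, ?_, ?_, ?_, ?_, ?_, ?_⟩
  · -- mono
    intro t ht i j
    by_cases hj : j = 0
    · simp only [hj, if_pos rfl]
      have := Sstep t i
      push_cast
      omega
    · simp only [if_neg hj]
      exact Bmono t i j
  · -- diag
    intro t ht i j hjn
    by_cases hj : j = 0
    · subst hj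
      show (if (0+1 : ℕ) = 0 then ((i:ℤ)+1) - S t (i+1) else B t (i+1) (0+1)) ≤
        (if (0:ℕ) = 0 then (i:ℤ) - S t i else B t i 0)
      rw [if_neg (by omega), if_pos rfl]
      rw [show ((0:ℕ)+1) = 1 from rfl]
      by_cases hz : Z (i+1) 1 ≤ t
      · have hb : B t (i+1) 1 = 0 := by simp only [hBdef]; omega
        rw [hb]
        have := Sbound0 t i
        omega
      · push_neg at hz
        have hi : 1 ≤ i := by
          by_contra hc
          have hi0 : i = 0 := by omega
          subst hi0
          have := L6 1 1 le_rfl le_rfl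
          rw [Nat.zero_add] at hz
          omega
        have := Sbound t i hi
        have := (B01 t (i+1) 1).2
        omega
    · have hj1 : j + 1 ≠ 0 := by omega
      simp only [if_neg hj, if_neg hj1]
      exact Bdiag t i j
  · -- bottom row
    intro t ht j
    by_cases hj : j = 0
    · simp [hj, S0]
    · simp [hj, B0]
  · -- top row, column 0
    intro t ht
    simp only [if_pos rfl, Stop t ht]
    push_cast
    omega
  · -- top row, other columns
    intro t ht j hj hjn
    have : j ≠ 0 := by omega
    simp only [if_neg this]
    exact Btop t ht j hj hjn
  · -- row sums
    intro t ht i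
    rw [Finset.range_eq_Ico, Finset.sum_eq_sum_Ico_succ_bot hn]
    have : ∀ j ∈ Ico (0+1) n, (if j = 0 then (i : ℤ) - S t i else B t i j) = B t i j := by
      intro j hj
      rw [if_neg (by have := (mem_Ico.1 hj).1; omega)]
    rw [Finset.sum_congr rfl this]
    simp only [hSdef, if_true]
    ring
  · -- sum over slices
    intro i j him hjn
    by_cases hj : j = 0
    · subst hj
      have hite : ∀ t ∈ range k, (if (0:ℕ) = 0 then (i:ℤ) - S t i else B t i 0)
          = (i:ℤ) - S t i := fun t _ => if_pos rfl
      rw [Finset.sum_congr rfl hite]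
      rw [Finset.sum_sub_distrib, Finset.sum_const, Finset.card_range, nsmul_eq_mul]
      have hSsum : ∑ t ∈ range k, S t i = ∑ j ∈ Ico 1 n, Z i j := by
        simp only [hSdef]
        rw [Finset.sum_comm]
        exact Finset.sum_congr rfl fun j hj => Bsum i j (mem_Ico.1 hj).1
      rw [hSsum]
      have h7 := L7 i him
      rw [Finset.range_eq_Ico, Finset.sum_eq_sum_Ico_succ_bot hn] at h7
      linarith
    · simp only [if_neg hj]
      exact Bsum i j (by omega)

/-- For a hook shape `λ = (h,1,…,1) ∈ ℤ^l`, `μ = 0`, and the weight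
`1 = (1,…,1)` with `h + l - 1` entries, the polytope `P_{λ/μ,1}` has the
integer decomposition property. -/
theorem statement3 (h l : ℕ) (hh : 1 ≤ h) (hl : 1 ≤ l)
    (lam : Fin l → ℤ)
    (hlam0 : lam ⟨0, hl⟩ = (h : ℤ))
    (hlam1 : ∀ i : Fin l, (i : ℕ) ≠ 0 → lam i = 1) :
    HasIDP (h + l - 1) l lam (fun _ => 0) (fun _ => 1) := by
  suffices key : ∀ M : ℕ, M + 1 = h + l → HasIDP M l lam (fun _ => 0) (fun _ => 1) by
    exact key (h + l - 1) (by omega)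
  intro M hmn
  have hm : 1 ≤ M := by omega
  intro k hk x hx hint
  choose z hz using hint
  obtain ⟨⟨hmono, hdiag⟩, hbot, htop, hw⟩ := hx
  have zmono : ∀ (i : Fin M) (j : Fin l), z i.castSucc j ≤ z i.succ j := by
    intro i j
    have := hmono i j
    rw [hz, hz] at this
    exact_mod_cast this
  have zdiag : ∀ (i : Fin M) (j : Fin l) (hj : (j:ℕ) + 1 < l),
      z i.succ ⟨(j:ℕ)+1, hj⟩ ≤ z i.castSucc j := by
    intro i j hj
    have := hdiag i j hj
    rw [hz, hz] at this
    exact_mod_cast this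
  have zbot : ∀ j, z 0 j = 0 := by
    intro j
    have := hbot j
    rw [hz] at this
    simp only [mul_zero, Int.cast_zero] at this
    exact_mod_cast this
  have ztop : ∀ j, z (Fin.last M) j = (k : ℤ) * lam j := by
    intro j
    have := htop j
    rw [hz] at this
    exact_mod_cast this
  have zw : ∀ i : Fin M, (∑ j, z i.succ j) - (∑ j, z i.castSucc j) = (k : ℤ) := by
    intro i
    have h0 := hw i
    have e1 : (∑ j, x i.succ j) = ((∑ j, z i.succ j : ℤ) : ℝ) := by
      rw [Int.cast_sum]
      exact Finset.sum_congr rfl fun j _ => hz _ j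
    have e2 : (∑ j, x i.castSucc j) = ((∑ j, z i.castSucc j : ℤ) : ℝ) := by
      rw [Int.cast_sum]
      exact Finset.sum_congr rfl fun j _ => hz _ j
    rw [e1, e2] at h0
    norm_num at h0
    exact_mod_cast h0
  -- the extended integer array
  set Z : ℕ → ℕ → ℤ := fun i j =>
    if hj : j < l then z ⟨min i M, by omega⟩ ⟨j, hj⟩ else 0 with hZdef
  have Zval : ∀ (i : ℕ) (hi : i < M + 1) (j : ℕ) (hj : j < l),
      Z i j = z ⟨i, hi⟩ ⟨j, hj⟩ := by
    intro i hi j hj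
    simp only [hZdef, dif_pos hj]
    congr 1
    exact Fin.ext (by simp; omega)
  have Hhigh : ∀ i j, l ≤ j → Z i j = 0 := by
    intro i j hj
    simp only [hZdef, dif_neg (by omega : ¬ j < l)]
  have Hstab : ∀ i j, M ≤ i → Z i j = Z M j := by
    intro i j him
    by_cases hj : j < l
    · simp only [hZdef, dif_pos hj]
      congr 1
      exact Fin.ext (by simp; omega)
    · simp only [hZdef, dif_neg hj]
  have H3 : ∀ j, Z 0 j = 0 := by
    intro j
    by_cases hj : j < l
    · rw [Zval 0 (by omega) j hj]
      have := zbot ⟨j, hj⟩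
      convert this using 2
      exact Fin.ext (by simp)
    · exact Hhigh 0 j (by omega)
  have H1 : ∀ i j, Z i j ≤ Z (i+1) j := by
    intro i j
    by_cases hj : j < l
    · rcases le_or_gt (i+1) M with hi1 | hi1
      · rw [Zval i (by omega) j hj, Zval (i+1) (by omega) j hj]
        exact zmono ⟨i, by omega⟩ ⟨j, hj⟩
      · rw [Hstab i j (by omega), Hstab (i+1) j (by omega)]
    · rw [Hhigh i j (by omega), Hhigh (i+1) j (by omega)]
  have L1 : ∀ i j, 0 ≤ Z i j := by
    intro i j
    induction i with
    | zero => exact (H3 j).ge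
    | succ i ih => exact ih.trans (H1 i j)
  have ztop' : ∀ (j : ℕ) (hj : j < l), Z M j = (k : ℤ) * lam ⟨j, hj⟩ := by
    intro j hj
    rw [Zval M (by omega) j hj]
    have := ztop ⟨j, hj⟩
    convert this using 2
    exact Fin.ext (by simp)
  have H4 : ∀ j, 1 ≤ j → j < l → Z M j = k := by
    intro j hj hjl
    rw [ztop' j hjl, hlam1 ⟨j, hjl⟩ (by simp; omega), mul_one]
  have Ztop0 : Z M 0 = (k : ℤ) * h := by
    rw [ztop' 0 (by omega)]
    exact congrArg (fun a => (k:ℤ) * a) hlam0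
  have H2 : ∀ i j, Z (i+1) (j+1) ≤ Z i j := by
    intro i j
    by_cases hj1 : j + 1 < l
    · rcases le_or_gt (i+1) M with hi1 | hi1
      · rw [Zval (i+1) (by omega) (j+1) hj1, Zval i (by omega) j (by omega)]
        exact zdiag ⟨i, by omega⟩ ⟨j, by omega⟩ hj1
      · rw [Hstab (i+1) (j+1) (by omega), Hstab i j (by omega)]
        rw [H4 (j+1) (by omega) hj1]
        rcases Nat.eq_zero_or_pos j with rfl | hj
        · rw [Ztop0]
          have : (1:ℤ) ≤ (h:ℤ) := by exact_mod_cast hh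
          nlinarith [Int.natCast_nonneg k]
        · rw [H4 j hj (by omega)]
    · rw [Hhigh (i+1) (j+1) (by omega)]
      exact L1 i j
  have sumZ : ∀ (i : ℕ), i ≤ M → ∀ (hi : i < M + 1),
      ∑ j ∈ range l, Z i j = ∑ j : Fin l, z ⟨i, hi⟩ j := by
    intro i him hi
    rw [← Fin.sum_univ_eq_sum_range (fun j => Z i j) l]
    refine Finset.sum_congr rfl fun j _ => ?_
    rw [Zval i (by omega) j.val j.isLt]
  have H5 : ∀ i, i < M → (∑ j ∈ range l, Z (i+1) j) - ∑ j ∈ range l, Z i j = k := by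
    intro i hi
    rw [sumZ (i+1) (by omega) (by omega), sumZ i (by omega) (by omega)]
    exact zw ⟨i, hi⟩
  obtain ⟨Y, c1, c2, c3, c4, c5, c6, c7⟩ :=
    main_aux M l k h hk hl hm hmn Z Hhigh H1 H2 H3 H4 H5 Hstab
  refine ⟨fun t i j => ((Y t i j : ℤ) : ℝ), ?_, ?_, ?_⟩
  · intro t
    refine ⟨⟨?_, ?_⟩, ?_, ?_, ?_⟩
    · intro i j
      exact Int.cast_le.mpr (c1 t t.isLt i j)
    · intro i j hj
      exact Int.cast_le.mpr (c2 t t.isLt i j hj)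
    · intro j
      dsimp only
      have h0 : ((0 : Fin (M+1)) : ℕ) = 0 := Fin.val_zero _
      rw [show ((Y (t:ℕ) ((0 : Fin (M+1)) : ℕ) (j:ℕ) : ℤ) : ℝ)
          = ((Y (t:ℕ) 0 (j:ℕ) : ℤ) : ℝ) by rw [h0]]
      rw [c3 t t.isLt j]
      try norm_num
    · intro j
      dsimp only
      have hlast : ((Fin.last M : Fin (M+1)) : ℕ) = M := Fin.val_last _
      by_cases hj0 : (j : ℕ) = 0
      · have hje : j = ⟨0, hl⟩ := Fin.ext (by simp [hj0])
        rw [show ((Y (t:ℕ) ((Fin.last M : Fin (M+1)) : ℕ) (j:ℕ) : ℤ) : ℝ)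
            = ((Y (t:ℕ) M 0 : ℤ) : ℝ) by rw [hlast, hj0]]
        rw [c4 t t.isLt]
        try rw [hje]
        try rw [hlam0]
        try norm_num
      · rw [show ((Y (t:ℕ) ((Fin.last M : Fin (M+1)) : ℕ) (j:ℕ) : ℤ) : ℝ)
            = ((Y (t:ℕ) M (j:ℕ) : ℤ) : ℝ) by rw [hlast]]
        rw [c5 t t.isLt j (by omega) j.isLt, hlam1 j hj0]
        try norm_num
    · intro i
      dsimp only
      have hs : ∀ i' : ℕ, (∑ j : Fin l, ((Y (t:ℕ) i' (j:ℕ) : ℤ) : ℝ)) = (i' : ℝ) := by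
        intro i'
        have hc := c6 t t.isLt i'
        rw [← Fin.sum_univ_eq_sum_range (fun j => Y (t:ℕ) i' j) l] at hc
        rw [← Int.cast_sum, hc]
        norm_num
      rw [hs, hs]
      have : ((i.succ : Fin (M+1)) : ℕ) = (i : ℕ) + 1 := Fin.val_succ i
      rw [this, show ((i.castSucc : Fin (M+1)) : ℕ) = (i : ℕ) from rfl]
      push_cast
      ring
  · intro t i j
    exact ⟨Y t i j, rfl⟩
  · intro i j
    dsimp only
    rw [hz i j]
    have hc := c7 i j (by omega) j.isLt
    rw [Zval i (by omega) j j.isLt] at hc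
    have : z ⟨(i:ℕ), by omega⟩ ⟨(j:ℕ), j.isLt⟩ = z i j := by congr 1 <;> exact Fin.ext rfl
    rw [this] at hc
    rw [← hc, ← Fin.sum_univ_eq_sum_range (fun t => Y t (i:ℕ) (j:ℕ)) k]
    rw [Int.cast_sum]
end

section
/- Let w and w' be nonnegative integer weight vectors with w' a refinement of w, both of total sum |λ|−|μ|. If P_{λ/μ,w'} has the integer decomposition property, then P_{λ/μ,w} has the integer decomposition property. -/
open Finset

/-- `w'` is a (composition) refinement of `w`: there is a monotone surjection
from fine indices onto coarse indices such that each entry of `w` is the sum of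
the entries of `w'` in the corresponding block (blocks are consecutive and
nonempty). -/
def Refines {m m' : ℕ} (w : Fin m → ℤ) (w' : Fin m' → ℤ) : Prop :=
  ∃ g : Fin m' → Fin m, Monotone g ∧ Function.Surjective g ∧
    ∀ s : Fin m, w s = ∑ t ∈ Finset.univ.filter (fun t => g t = s), w' t

section Interface
variable {m n : ℕ} {lam mu : Fin n → ℤ} {w : Fin m → ℤ} {x : Fin (m+1) → Fin n → ℝ}

lemma gt_col (hx : x ∈ gtPolytope m n lam mu w) {i j : ℕ} (hi : i < m) (hj : j < n) :
    x ⟨i, by omega⟩ ⟨j, hj⟩ ≤ x ⟨i+1, by omega⟩ ⟨j, hj⟩ := by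
  have h := hx.1.1 ⟨i, hi⟩ ⟨j, hj⟩
  simpa [Fin.castSucc_mk, Fin.succ_mk] using h

lemma gt_diag (hx : x ∈ gtPolytope m n lam mu w) {i j : ℕ} (hi : i < m) (hj : j + 1 < n) :
    x ⟨i+1, by omega⟩ ⟨j+1, hj⟩ ≤ x ⟨i, by omega⟩ ⟨j, by omega⟩ := by
  have h := hx.1.2 ⟨i, hi⟩ ⟨j, by omega⟩ hj
  simpa [Fin.castSucc_mk, Fin.succ_mk] using h

lemma gt_bot (hx : x ∈ gtPolytope m n lam mu w) (j : Fin n) :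
    x ⟨0, by omega⟩ j = (mu j : ℝ) := by
  simpa using hx.2.1 j

lemma gt_top (hx : x ∈ gtPolytope m n lam mu w) (j : Fin n) :
    x ⟨m, by omega⟩ j = (lam j : ℝ) := by
  simpa [Fin.last] using hx.2.2.1 j

lemma gt_sum (hx : x ∈ gtPolytope m n lam mu w) {i : ℕ} (hi : i < m) :
    (∑ j, x ⟨i+1, by omega⟩ j) - (∑ j, x ⟨i, by omega⟩ j) = (w ⟨i, hi⟩ : ℝ) := by
  have h := hx.2.2.2 ⟨i, hi⟩
  simpa [Fin.castSucc_mk, Fin.succ_mk] using h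

lemma gt_mk
    (hcol : ∀ i j (_ : i < m) (hj : j < n), x ⟨i, by omega⟩ ⟨j, hj⟩ ≤ x ⟨i+1, by omega⟩ ⟨j, hj⟩)
    (hdiag : ∀ i j (_ : i < m) (hj : j + 1 < n),
      x ⟨i+1, by omega⟩ ⟨j+1, hj⟩ ≤ x ⟨i, by omega⟩ ⟨j, by omega⟩)
    (hbot : ∀ j, x ⟨0, by omega⟩ j = (mu j : ℝ))
    (htop : ∀ j, x ⟨m, by omega⟩ j = (lam j : ℝ))
    (hsum : ∀ i (hi : i < m),
      (∑ j, x ⟨i+1, by omega⟩ j) - (∑ j, x ⟨i, by omega⟩ j) = (w ⟨i, hi⟩ : ℝ)) :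
    x ∈ gtPolytope m n lam mu w := by
  refine ⟨⟨fun i j => ?_, fun i j h => ?_⟩, fun j => ?_, fun j => ?_, fun i => ?_⟩
  · rcases i with ⟨i, hi⟩; rcases j with ⟨j, hj⟩
    simpa [Fin.castSucc_mk, Fin.succ_mk] using hcol i j hi hj
  · rcases i with ⟨i, hi⟩; rcases j with ⟨j, hj⟩
    simpa [Fin.castSucc_mk, Fin.succ_mk] using hdiag i j hi h
  · simpa using hbot j
  · simpa [Fin.last] using htop j
  · rcases i with ⟨i, hi⟩
    simpa [Fin.castSucc_mk, Fin.succ_mk] using hsum i hi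

end Interface

def splitVec (m : ℕ) (w : Fin m → ℤ) (p : Fin m) (a b : ℤ) : Fin (m+1) → ℤ :=
  fun i =>
    if h1 : (i : ℕ) < p.1 then w ⟨i, by have := p.isLt; omega⟩
    else if h2 : (i : ℕ) = p.1 then a
    else if h3 : (i : ℕ) = p.1 + 1 then b
    else w ⟨(i : ℕ) - 1, by have := i.isLt; omega⟩

lemma splitVec_lt {m : ℕ} {w : Fin m → ℤ} {p : Fin m} {a b : ℤ} {i : Fin (m+1)}
    (h : (i : ℕ) < p.1) (h2 : (i : ℕ) < m) :
    splitVec m w p a b i = w ⟨i, h2⟩ := by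
  simp only [splitVec]; rw [dif_pos h]

lemma splitVec_eqa {m : ℕ} {w : Fin m → ℤ} {p : Fin m} {a b : ℤ} {i : Fin (m+1)}
    (h : (i : ℕ) = p.1) :
    splitVec m w p a b i = a := by
  simp only [splitVec]; rw [dif_neg (by omega), dif_pos h]

lemma splitVec_eqb {m : ℕ} {w : Fin m → ℤ} {p : Fin m} {a b : ℤ} {i : Fin (m+1)}
    (h : (i : ℕ) = p.1 + 1) :
    splitVec m w p a b i = b := by
  simp only [splitVec]; rw [dif_neg (by omega), dif_neg (by omega), dif_pos h]

lemma splitVec_gt {m : ℕ} {w : Fin m → ℤ} {p : Fin m} {a b : ℤ} {i : Fin (m+1)}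
    (h : p.1 + 1 < (i : ℕ)) (h2 : (i : ℕ) - 1 < m) :
    splitVec m w p a b i = w ⟨(i : ℕ) - 1, h2⟩ := by
  simp only [splitVec]; rw [dif_neg (by omega), dif_neg (by omega), dif_neg (by omega)]

section Interface2
variable {m n : ℕ} {lam mu : Fin n → ℤ} {w : Fin m → ℤ} {x : Fin (m+1) → Fin n → ℝ}

lemma gt_col2 (hx : x ∈ gtPolytope m n lam mu w) {i i' j : ℕ}
    (hij : i + 1 = i') (him : i < m) (hi : i < m+1) (hi' : i' < m+1) (hj : j < n) :
    x ⟨i, hi⟩ ⟨j, hj⟩ ≤ x ⟨i', hi'⟩ ⟨j, hj⟩ := by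
  subst hij; exact gt_col hx him hj

lemma gt_diag2 (hx : x ∈ gtPolytope m n lam mu w) {i i' j j' : ℕ}
    (hij : i + 1 = i') (hjj : j + 1 = j') (him : i < m) (hi : i < m+1) (hi' : i' < m+1)
    (hj' : j' < n) (hj : j < n) :
    x ⟨i', hi'⟩ ⟨j', hj'⟩ ≤ x ⟨i, hi⟩ ⟨j, hj⟩ := by
  subst hij; subst hjj; exact gt_diag hx him hj'

lemma gt_sum2 (hx : x ∈ gtPolytope m n lam mu w) {i i' : ℕ}
    (hij : i + 1 = i') (him : i < m) (hi : i < m+1) (hi' : i' < m+1) :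
    (∑ j, x ⟨i', hi'⟩ j) - (∑ j, x ⟨i, hi⟩ j) = (w ⟨i, him⟩ : ℝ) := by
  subst hij; exact gt_sum hx him

end Interface2

set_option maxHeartbeats 2000000 in
open Classical in
theorem split_idp (n : ℕ) (lam mu : Fin n → ℤ) (m : ℕ) (w : Fin m → ℤ)
    (p : Fin m) (a b : ℤ) (ha : 0 ≤ a) (hb : 0 ≤ b) (hab : a + b = w p)
    (hidp : HasIDP (m+1) n lam mu (splitVec m w p a b)) :
    HasIDP m n lam mu w := by
  intro k hk x hx hxint
  have hp : p.1 < m := p.isLt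
  choose X hX using hxint
  have hP1b : p.1 < m+1 := by omega
  have hP2b : p.1+1 < m+1 := by omega
  obtain ⟨XP1, hXP1⟩ : ∃ f : Fin n → ℤ, ∀ j, x ⟨p.1, hP1b⟩ j = (f j : ℝ) :=
    ⟨fun j => X ⟨p.1, hP1b⟩ j, fun j => hX _ j⟩
  obtain ⟨XP2, hXP2⟩ : ∃ f : Fin n → ℤ, ∀ j, x ⟨p.1+1, hP2b⟩ j = (f j : ℝ) :=
    ⟨fun j => X ⟨p.1+1, hP2b⟩ j, fun j => hX _ j⟩
  set SZ : ℕ → ℤ :=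
    fun r => ∑ j ∈ univ.filter (fun j : Fin n => r ≤ (j:ℕ)), (XP2 j - XP1 j) with hSZdef
  have hd0 : ∀ j : Fin n, (0:ℤ) ≤ XP2 j - XP1 j := by
    intro j
    have h := gt_col2 hx rfl hp hP1b hP2b j.isLt
    rw [hXP1 j, hXP2 j] at h
    exact_mod_cast sub_nonneg.mpr h
  have hSge : ∀ r, n ≤ r → SZ r = 0 := by
    intro r hr
    simp only [hSZdef]
    have : univ.filter (fun j : Fin n => r ≤ (j:ℕ)) = ∅ := by
      ext j
      simp only [mem_filter, mem_univ, true_and, notMem_empty, iff_false]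
      have := j.isLt; omega
    rw [this, Finset.sum_empty]
  have hS0 : SZ 0 = (k:ℤ) * w p := by
    have hsum := gt_sum2 hx rfl hp hP1b hP2b
    have hfull : univ.filter (fun j : Fin n => 0 ≤ (j:ℕ)) = univ := by
      ext j; simp
    have : ((SZ 0 : ℤ) : ℝ) = ((((k:ℤ) * w p : ℤ)) : ℝ) := by
      simp only [hSZdef, hfull]
      push_cast
      rw [Finset.sum_sub_distrib]
      rw [Finset.sum_congr rfl (fun j _ => (hXP2 j).symm),
        Finset.sum_congr rfl (fun j _ => (hXP1 j).symm)]
      rw [hsum]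
      simp only [Fin.eta]
      push_cast
      ring
    exact_mod_cast this
  have hSmono : ∀ r, SZ (r+1) ≤ SZ r := by
    intro r
    simp only [hSZdef]
    apply Finset.sum_le_sum_of_subset_of_nonneg
    · intro j hj
      simp only [mem_filter, mem_univ, true_and] at hj ⊢
      omega
    · intro j _ _; exact hd0 j
  have FS : ∀ r (hr : r < n), SZ r = (XP2 ⟨r, hr⟩ - XP1 ⟨r, hr⟩) + SZ (r+1) := by
    intro r hr
    simp only [hSZdef]
    have hset : univ.filter (fun j : Fin n => r ≤ (j:ℕ)) =
        insert ⟨r, hr⟩ (univ.filter (fun j : Fin n => r+1 ≤ (j:ℕ))) := by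
      ext j
      simp only [mem_filter, mem_univ, true_and, mem_insert, Fin.ext_iff]
      omega
    rw [hset, Finset.sum_insert (by simp)]
  -- the pivot column
  set c : ℕ := Nat.findGreatest (fun r => (k:ℤ) * a ≤ SZ r) n with hcdef
  have hc0 : (k:ℤ) * a ≤ SZ 0 := by
    rw [hS0, ← hab]
    have : 0 ≤ (k:ℤ) * b := mul_nonneg (by exact_mod_cast Nat.zero_le k) hb
    nlinarith [this]
  have hcn : c ≤ n := Nat.findGreatest_le n
  have hcspec : (k:ℤ) * a ≤ SZ c :=
    Nat.findGreatest_spec (P := fun r => (k:ℤ) * a ≤ SZ r) (Nat.zero_le n) hc0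
  have hcmax : ∀ r, c < r → r ≤ n → SZ r < (k:ℤ) * a := by
    intro r h1 h2
    have := Nat.findGreatest_is_greatest (P := fun r => (k:ℤ) * a ≤ SZ r) (n := n) h1 h2
    omega
  have hka0 : 0 ≤ (k:ℤ) * a := mul_nonneg (by exact_mod_cast Nat.zero_le k) ha
  have he0 : 0 ≤ (k:ℤ) * a - SZ (c+1) := by
    rcases lt_or_ge c n with h | h
    · have := hcmax (c+1) (by omega) (by omega); omega
    · have := hSge (c+1) (by omega); omega
  -- the inserted row
  set CZ : Fin n → ℤ := fun j =>
    if (j:ℕ) < c then XP1 j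
    else if (j:ℕ) = c then XP1 j + ((k:ℤ) * a - SZ (c+1))
    else XP2 j with hCZdef
  have hCl : ∀ j, XP1 j ≤ CZ j := by
    intro j
    simp only [hCZdef]
    split_ifs with h1 h2
    · omega
    · omega
    · have := hd0 j; omega
  have hCu : ∀ j, CZ j ≤ XP2 j := by
    intro j
    simp only [hCZdef]
    split_ifs with h1 h2
    · have := hd0 j; omega
    · have hcltn : c < n := by have := j.isLt; omega
      have := FS c hcltn
      have he : (⟨c, hcltn⟩ : Fin n) = j := by apply Fin.ext; simp [h2]
      rw [he] at this
      omega
    · omega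
  -- sum of the inserted row
  have hCsum : ∑ j, CZ j = (∑ j, XP1 j) + (k:ℤ) * a := by
    have hD : ∑ j, (CZ j - XP1 j) = (k:ℤ) * a := by
      have h1 : ∑ j ∈ univ.filter (fun j : Fin n => c ≤ (j:ℕ)), (CZ j - XP1 j)
          = ∑ j, (CZ j - XP1 j) := by
        apply Finset.sum_subset (Finset.subset_univ _)
        intro j _ hj
        simp only [mem_filter, mem_univ, true_and] at hj
        have hjc : (j:ℕ) < c := by omega
        simp only [hCZdef]
        rw [if_pos hjc]; ring
      rcases lt_or_ge c n with hcl | hcg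
      · have hset : univ.filter (fun j : Fin n => c ≤ (j:ℕ)) =
            insert ⟨c, hcl⟩ (univ.filter (fun j : Fin n => c+1 ≤ (j:ℕ))) := by
          ext j
          simp only [mem_filter, mem_univ, true_and, mem_insert, Fin.ext_iff]
          omega
        have hc_not : (⟨c,hcl⟩ : Fin n) ∉ univ.filter (fun j : Fin n => c+1 ≤ (j:ℕ)) := by
          simp
        have hrest : ∑ j ∈ univ.filter (fun j : Fin n => c+1 ≤ (j:ℕ)), (CZ j - XP1 j)
            = SZ (c+1) := by
          simp only [hSZdef]
          apply Finset.sum_congr rfl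
          intro j hj
          simp only [mem_filter, mem_univ, true_and] at hj
          simp only [hCZdef]
          rw [if_neg (by omega), if_neg (by omega)]
        have hpiv : CZ ⟨c,hcl⟩ - XP1 ⟨c,hcl⟩ = (k:ℤ) * a - SZ (c+1) := by
          simp only [hCZdef]
          rw [if_neg (by omega), if_pos (by trivial)]; ring
        rw [← h1, hset, Finset.sum_insert hc_not, hrest, hpiv]; ring
      · have hcn' : c = n := le_antisymm hcn hcg
        have hempty : univ.filter (fun j : Fin n => c ≤ (j:ℕ)) = ∅ := by
          ext j
          simp only [mem_filter, mem_univ, true_and, notMem_empty, iff_false]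
          have := j.isLt; omega
        have hka : (k:ℤ) * a = 0 := by
          have h := hcspec
          rw [hcn'] at h
          have := hSge n le_rfl
          omega
        rw [← h1, hempty, Finset.sum_empty, hka]
    rw [Finset.sum_sub_distrib] at hD
    omega
  -- the refined pattern
  set x' : Fin (m+1+1) → Fin n → ℝ := fun i j =>
    if h1 : (i:ℕ) ≤ p.1 then x ⟨i, by omega⟩ j
    else if h2 : (i:ℕ) = p.1 + 1 then ((CZ j : ℤ) : ℝ)
    else x ⟨(i:ℕ) - 1, by have := i.isLt; omega⟩ j with hx'def
  have Elow : ∀ (i : ℕ) (h2 : i < m+2) (h : i ≤ p.1) (j : Fin n) (h3 : i < m+1),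
      x' ⟨i, h2⟩ j = x ⟨i, h3⟩ j := by
    intro i h2 h j h3
    simp only [hx'def]
    rw [dif_pos h]
  have Emid : ∀ (h2 : p.1+1 < m+2) (j : Fin n), x' ⟨p.1+1, h2⟩ j = ((CZ j : ℤ):ℝ) := by
    intro h2 j
    simp only [hx'def]
    rw [dif_neg (by omega), dif_pos (by trivial)]
  have Ehigh : ∀ (i : ℕ) (h2 : i < m+2) (h : p.1+1 < i) (j : Fin n) (h3 : i - 1 < m+1),
      x' ⟨i, h2⟩ j = x ⟨i-1, h3⟩ j := by
    intro i h2 h j h3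
    simp only [hx'def]
    rw [dif_neg (by omega), dif_neg (by omega)]
  have hx'mem : x' ∈ gtPolytope (m+1) n (fun j => (k:ℤ) * lam j) (fun j => (k:ℤ) * mu j)
      (fun i => (k:ℤ) * splitVec m w p a b i) := by
    apply gt_mk
    · -- columns
      intro i j hi hj
      rcases Nat.lt_trichotomy i p.1 with hlt | heq | hgt
      · rw [Elow i (by omega) (by omega) ⟨j,hj⟩ (by omega),
          Elow (i+1) (by omega) (by omega) ⟨j,hj⟩ (by omega)]
        exact gt_col2 hx rfl (by omega) (by omega) (by omega) hj
      · subst heq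
        rw [Elow p.1 (by omega) le_rfl ⟨j,hj⟩ hP1b, Emid (by omega) ⟨j,hj⟩]
        rw [hXP1 ⟨j,hj⟩]
        exact_mod_cast hCl ⟨j,hj⟩
      · by_cases hip : i = p.1 + 1
        · subst hip
          rw [Emid (by omega) ⟨j,hj⟩,
            Ehigh (p.1+1+1) (by omega) (by omega) ⟨j,hj⟩ (by omega)]
          have : x ⟨p.1+1+1-1, by omega⟩ ⟨j,hj⟩ = ((XP2 ⟨j,hj⟩ : ℤ) : ℝ) := hXP2 ⟨j,hj⟩
          rw [this]
          exact_mod_cast hCu ⟨j,hj⟩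
        · rw [Ehigh i (by omega) (by omega) ⟨j,hj⟩ (by omega),
            Ehigh (i+1) (by omega) (by omega) ⟨j,hj⟩ (by omega)]
          exact gt_col2 hx (by omega) (by omega) (by omega) (by omega) hj
    · -- diagonals
      intro i j hi hj
      rcases Nat.lt_trichotomy i p.1 with hlt | heq | hgt
      · rw [Elow (i+1) (by omega) (by omega) ⟨j+1,hj⟩ (by omega),
          Elow i (by omega) (by omega) ⟨j, by omega⟩ (by omega)]
        exact gt_diag2 hx rfl rfl (by omega) (by omega) (by omega) hj (by omega)
      · subst heq
        rw [Emid (by omega) ⟨j+1,hj⟩, Elow p.1 (by omega) le_rfl ⟨j, by omega⟩ hP1b]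
        have h5 : x ⟨p.1+1, hP2b⟩ ⟨j+1, hj⟩ ≤ x ⟨p.1, hP1b⟩ ⟨j, by omega⟩ :=
          gt_diag2 hx rfl rfl (by omega) (by omega) (by omega) hj (by omega)
        have h6 : ((CZ ⟨j+1,hj⟩:ℤ):ℝ) ≤ x ⟨p.1+1, hP2b⟩ ⟨j+1,hj⟩ := by
          rw [hXP2 ⟨j+1,hj⟩]
          exact_mod_cast hCu ⟨j+1,hj⟩
        linarith
      · by_cases hip : i = p.1 + 1
        · subst hip
          rw [Ehigh (p.1+1+1) (by omega) (by omega) ⟨j+1,hj⟩ (by omega),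
            Emid (by omega) ⟨j, by omega⟩]
          have h5 : x ⟨p.1+1+1-1, by omega⟩ ⟨j+1, hj⟩ ≤ x ⟨p.1, hP1b⟩ ⟨j, by omega⟩ :=
            gt_diag2 hx (by omega) rfl (by omega) (by omega) (by omega) hj (by omega)
          have h6 : x ⟨p.1, hP1b⟩ ⟨j, by omega⟩ ≤ ((CZ ⟨j, by omega⟩:ℤ):ℝ) := by
            rw [hXP1 ⟨j, by omega⟩]
            exact_mod_cast hCl ⟨j, by omega⟩
          linarith
        · rw [Ehigh (i+1) (by omega) (by omega) ⟨j+1,hj⟩ (by omega),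
            Ehigh i (by omega) (by omega) ⟨j, by omega⟩ (by omega)]
          exact gt_diag2 hx (by omega) rfl (by omega) (by omega) (by omega) hj (by omega)
    · -- bottom
      intro j
      rw [Elow 0 (by omega) (by omega) j (by omega)]
      exact gt_bot hx j
    · -- top
      intro j
      rw [Ehigh (m+1) (by omega) (by omega) j (by omega)]
      exact gt_top hx j
    · -- row sums
      intro i hi
      rcases Nat.lt_trichotomy i p.1 with hlt | heq | hgt
      · have e1 : ∑ j, x' ⟨i+1, by omega⟩ j = ∑ j, x ⟨i+1, by omega⟩ j :=
          Finset.sum_congr rfl (fun j _ => Elow (i+1) (by omega) (by omega) j (by omega))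
        have e2 : ∑ j, x' ⟨i, by omega⟩ j = ∑ j, x ⟨i, by omega⟩ j :=
          Finset.sum_congr rfl (fun j _ => Elow i (by omega) (by omega) j (by omega))
        rw [e1, e2, splitVec_lt (i := ⟨i, hi⟩) hlt (show i < m by omega)]
        exact gt_sum2 hx rfl (by omega) (by omega) (by omega)
      · subst heq
        have e1 : ∑ j, x' ⟨p.1+1, by omega⟩ j = ∑ j, ((CZ j:ℤ):ℝ) :=
          Finset.sum_congr rfl (fun j _ => Emid (by omega) j)
        have e2 : ∑ j, x' ⟨p.1, by omega⟩ j = ∑ j, ((XP1 j:ℤ):ℝ) :=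
          Finset.sum_congr rfl (fun j _ => by
            rw [Elow p.1 (by omega) le_rfl j hP1b]; exact hXP1 j)
        rw [e1, e2, splitVec_eqa (i := (⟨p.1, hi⟩ : Fin (m+1))) rfl]
        have hc1 : ∑ j, ((CZ j:ℤ):ℝ) = ((∑ j, CZ j : ℤ):ℝ) := by push_cast; rfl
        have hc2 : ∑ j, ((XP1 j:ℤ):ℝ) = ((∑ j, XP1 j : ℤ):ℝ) := by push_cast; rfl
        rw [hc1, hc2, ← Int.cast_sub]
        have he : (∑ j, CZ j) - (∑ j, XP1 j) = (k:ℤ) * a := by omega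
        rw [he]
      · by_cases hip : i = p.1 + 1
        · subst hip
          have e1 : ∑ j, x' ⟨p.1+1+1, by omega⟩ j = ∑ j, ((XP2 j:ℤ):ℝ) :=
            Finset.sum_congr rfl (fun j _ => by
              rw [Ehigh (p.1+1+1) (by omega) (by omega) j (by omega)]; exact hXP2 j)
          have e2 : ∑ j, x' ⟨p.1+1, by omega⟩ j = ∑ j, ((CZ j:ℤ):ℝ) :=
            Finset.sum_congr rfl (fun j _ => Emid (by omega) j)
          rw [e1, e2, splitVec_eqb (i := (⟨p.1+1, hi⟩ : Fin (m+1))) rfl]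
          have hc1 : ∑ j, ((CZ j:ℤ):ℝ) = ((∑ j, CZ j : ℤ):ℝ) := by push_cast; rfl
          have hc2 : ∑ j, ((XP2 j:ℤ):ℝ) = ((∑ j, XP2 j : ℤ):ℝ) := by push_cast; rfl
          rw [hc1, hc2, ← Int.cast_sub]
          have hS0' : ∑ j, (XP2 j - XP1 j) = (k:ℤ) * w p := by
            have h0 := hS0
            simp only [hSZdef] at h0
            have hfull : univ.filter (fun j : Fin n => 0 ≤ (j:ℕ)) = univ := by
              ext j; simp
            rwa [hfull] at h0
          rw [Finset.sum_sub_distrib] at hS0'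
          have hbval : (∑ j, XP2 j) - (∑ j, CZ j) = (k:ℤ) * b := by
            have hw' : (k:ℤ) * w p = (k:ℤ) * a + (k:ℤ) * b := by rw [← hab]; ring
            omega
          rw [hbval]
        · have e1 : ∑ j, x' ⟨i+1, by omega⟩ j = ∑ j, x ⟨i+1-1, by omega⟩ j :=
            Finset.sum_congr rfl (fun j _ => Ehigh (i+1) (by omega) (by omega) j (by omega))
          have e2 : ∑ j, x' ⟨i, by omega⟩ j = ∑ j, x ⟨i-1, by omega⟩ j :=
            Finset.sum_congr rfl (fun j _ => Ehigh i (by omega) (by omega) j (by omega))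
          rw [e1, e2, splitVec_gt (i := ⟨i, hi⟩) (show p.1+1 < i by omega) (show i - 1 < m by omega)]
          exact gt_sum2 hx (by omega) (by omega) (by omega) (by omega)
  have hx'int : ∀ i j, ∃ z : ℤ, x' i j = (z:ℝ) := by
    intro i j
    rcases i with ⟨i, hi2⟩
    rcases le_or_gt i p.1 with hle | hgt
    · exact ⟨X ⟨i, by omega⟩ j, by rw [Elow i hi2 hle j (by omega)]; exact hX _ j⟩
    · by_cases hip : i = p.1 + 1
      · subst hip
        exact ⟨CZ j, by rw [Emid hi2 j]⟩
      · exact ⟨X ⟨i-1, by omega⟩ j, by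
          rw [Ehigh i hi2 (by omega) j (by omega)]; exact hX _ j⟩
  obtain ⟨y, hy1, hy2, hy3⟩ := hidp k hk x' hx'mem hx'int
  -- tightness above the pivot: for columns j > c the two top rows agree
  have tightU : ∀ (j : Fin n), c < (j:ℕ) → ∀ t,
      y t ⟨p.1+2, by omega⟩ j = y t ⟨p.1+1, by omega⟩ j := by
    intro j hj t
    have hnn : ∀ t ∈ univ, (0:ℝ) ≤ y t ⟨p.1+2, by omega⟩ j - y t ⟨p.1+1, by omega⟩ j := by
      intro t _
      have := gt_col2 (hy1 t) rfl (show p.1+1 < m+1 by omega) (by omega) (by omega) j.isLt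
      have h2 : y t ⟨p.1+1, by omega⟩ j ≤ y t ⟨p.1+2, by omega⟩ j := by
        convert this using 3 <;> omega
      linarith
    have hsum0 : ∑ t, (y t ⟨p.1+2, by omega⟩ j - y t ⟨p.1+1, by omega⟩ j) = 0 := by
      rw [Finset.sum_sub_distrib]
      have e1 := hy3 ⟨p.1+2, by omega⟩ j
      have e2 := hy3 ⟨p.1+1, by omega⟩ j
      have hv1 : x' ⟨p.1+2, by omega⟩ j = x ⟨p.1+1, hP2b⟩ j := by
        rw [Ehigh (p.1+2) (by omega) (by omega) j (by omega)]
        rfl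
      have hv2 : x' ⟨p.1+1, by omega⟩ j = ((CZ j : ℤ):ℝ) := Emid (by omega) j
      have hv3 : ((CZ j : ℤ):ℝ) = ((XP2 j : ℤ):ℝ) := by
        have : CZ j = XP2 j := by
          simp only [hCZdef]
          rw [if_neg (by omega), if_neg (by omega)]
        rw [this]
      rw [hv1] at e1
      rw [hv2, hv3] at e2
      rw [← e1, ← e2, hXP2 j]
      ring
    have := (Finset.sum_eq_zero_iff_of_nonneg hnn).1 hsum0 t (mem_univ t)
    linarith
  -- tightness below the pivot: for columns j < c the two bottom rows agree
  have tightL : ∀ (j : Fin n), (j:ℕ) < c → ∀ t,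
      y t ⟨p.1+1, by omega⟩ j = y t ⟨p.1, by omega⟩ j := by
    intro j hj t
    have hnn : ∀ t ∈ univ, (0:ℝ) ≤ y t ⟨p.1+1, by omega⟩ j - y t ⟨p.1, by omega⟩ j := by
      intro t _
      have := gt_col2 (hy1 t) rfl (show p.1 < m+1 by omega) (by omega) (by omega) j.isLt
      have h2 : y t ⟨p.1, by omega⟩ j ≤ y t ⟨p.1+1, by omega⟩ j := by
        convert this using 3 <;> omega
      linarith
    have hsum0 : ∑ t, (y t ⟨p.1+1, by omega⟩ j - y t ⟨p.1, by omega⟩ j) = 0 := by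
      rw [Finset.sum_sub_distrib]
      have e1 := hy3 ⟨p.1+1, by omega⟩ j
      have e2 := hy3 ⟨p.1, by omega⟩ j
      have hv1 : x' ⟨p.1+1, by omega⟩ j = ((CZ j : ℤ):ℝ) := Emid (by omega) j
      have hv3 : ((CZ j : ℤ):ℝ) = ((XP1 j : ℤ):ℝ) := by
        have : CZ j = XP1 j := by
          simp only [hCZdef]
          rw [if_pos hj]
        rw [this]
      have hv2 : x' ⟨p.1, by omega⟩ j = x ⟨p.1, hP1b⟩ j :=
        Elow p.1 (by omega) le_rfl j hP1b
      rw [hv1, hv3] at e1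
      rw [hv2] at e2
      rw [← e1, ← e2, hXP1 j]
      ring
    have := (Finset.sum_eq_zero_iff_of_nonneg hnn).1 hsum0 t (mem_univ t)
    linarith
  -- delete the inserted row from each summand
  set z : Fin k → Fin (m+1) → Fin n → ℝ := fun t i j =>
    if h : (i:ℕ) ≤ p.1 then y t ⟨(i:ℕ), by omega⟩ j
    else y t ⟨(i:ℕ)+1, by have := i.isLt; omega⟩ j with hzdef
  have Zlow : ∀ t (i : ℕ) (h2 : i < m+1) (h : i ≤ p.1) (j : Fin n) (h3 : i < m+2),
      z t ⟨i, h2⟩ j = y t ⟨i, h3⟩ j := by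
    intro t i h2 h j h3
    simp only [hzdef]; rw [dif_pos h]
  have Zhigh : ∀ t (i : ℕ) (h2 : i < m+1) (h : p.1 < i) (j : Fin n) (h3 : i+1 < m+2),
      z t ⟨i, h2⟩ j = y t ⟨i+1, h3⟩ j := by
    intro t i h2 h j h3
    simp only [hzdef]; rw [dif_neg (by omega)]
  refine ⟨z, ?_, ?_, ?_⟩
  · -- membership in the coarse polytope
    intro t
    apply gt_mk
    · -- columns
      intro i j hi hj
      rcases Nat.lt_trichotomy i p.1 with hlt | heq | hgt
      · rw [Zlow t i (by omega) (by omega) ⟨j,hj⟩ (by omega),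
          Zlow t (i+1) (by omega) (by omega) ⟨j,hj⟩ (by omega)]
        exact gt_col2 (hy1 t) rfl (by omega) (by omega) (by omega) hj
      · subst heq
        rw [Zlow t p.1 (by omega) le_rfl ⟨j,hj⟩ (by omega),
          Zhigh t (p.1+1) (by omega) (by omega) ⟨j,hj⟩ (by omega)]
        have s1 : y t ⟨p.1, by omega⟩ ⟨j,hj⟩ ≤ y t ⟨p.1+1, by omega⟩ ⟨j,hj⟩ :=
          gt_col2 (hy1 t) rfl (by omega) (by omega) (by omega) hj
        have s2 : y t ⟨p.1+1, by omega⟩ ⟨j,hj⟩ ≤ y t ⟨p.1+1+1, by omega⟩ ⟨j,hj⟩ :=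
          gt_col2 (hy1 t) rfl (by omega) (by omega) (by omega) hj
        exact le_trans s1 s2
      · rw [Zhigh t i (by omega) (by omega) ⟨j,hj⟩ (by omega),
          Zhigh t (i+1) (by omega) (by omega) ⟨j,hj⟩ (by omega)]
        exact gt_col2 (hy1 t) rfl (by omega) (by omega) (by omega) hj
    · -- diagonals
      intro i j hi hj
      rcases Nat.lt_trichotomy i p.1 with hlt | heq | hgt
      · rw [Zlow t (i+1) (by omega) (by omega) ⟨j+1,hj⟩ (by omega),
          Zlow t i (by omega) (by omega) ⟨j, by omega⟩ (by omega)]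
        exact gt_diag2 (hy1 t) rfl rfl (by omega) (by omega) (by omega) hj (by omega)
      · subst heq
        rw [Zhigh t (p.1+1) (by omega) (by omega) ⟨j+1,hj⟩ (by omega),
          Zlow t p.1 (by omega) le_rfl ⟨j, by omega⟩ (by omega)]
        by_cases hjc : (j:ℕ) < c
        · have e := tightL ⟨j, by omega⟩ hjc t
          have d1 : y t ⟨p.1+1+1, by omega⟩ ⟨j+1, hj⟩ ≤ y t ⟨p.1+1, by omega⟩ ⟨j, by omega⟩ :=
            gt_diag2 (hy1 t) rfl rfl (by omega) (by omega) (by omega) hj (by omega)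
          exact le_trans d1 (le_of_eq e)
        · have e := tightU ⟨j+1, hj⟩ (show c < j+1 by omega) t
          have d1 : y t ⟨p.1+1, by omega⟩ ⟨j+1, hj⟩ ≤ y t ⟨p.1, by omega⟩ ⟨j, by omega⟩ :=
            gt_diag2 (hy1 t) rfl rfl (by omega) (by omega) (by omega) hj (by omega)
          exact le_trans (le_of_eq e) d1
      · rw [Zhigh t (i+1) (by omega) (by omega) ⟨j+1,hj⟩ (by omega),
          Zhigh t i (by omega) (by omega) ⟨j, by omega⟩ (by omega)]
        exact gt_diag2 (hy1 t) rfl rfl (by omega) (by omega) (by omega) hj (by omega)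
    · -- bottom
      intro j
      rw [Zlow t 0 (by omega) (by omega) j (by omega)]
      exact gt_bot (hy1 t) j
    · -- top
      intro j
      rw [Zhigh t m (by omega) (by omega) j (by omega)]
      exact gt_top (hy1 t) j
    · -- row sums
      intro i hi
      rcases Nat.lt_trichotomy i p.1 with hlt | heq | hgt
      · have e1 : ∑ j, z t ⟨i+1, by omega⟩ j = ∑ j, y t ⟨i+1, by omega⟩ j :=
          Finset.sum_congr rfl (fun j _ => Zlow t (i+1) (by omega) (by omega) j (by omega))
        have e2 : ∑ j, z t ⟨i, by omega⟩ j = ∑ j, y t ⟨i, by omega⟩ j :=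
          Finset.sum_congr rfl (fun j _ => Zlow t i (by omega) (by omega) j (by omega))
        rw [e1, e2]
        have hs := gt_sum2 (hy1 t) rfl (show i < m+1 by omega) (by omega) (by omega)
        have hv : splitVec m w p a b ⟨i, by omega⟩ = w ⟨i, hi⟩ :=
          splitVec_lt hlt hi
        rw [hv] at hs
        exact hs
      · subst heq
        have e1 : ∑ j, z t ⟨p.1+1, by omega⟩ j = ∑ j, y t ⟨p.1+1+1, by omega⟩ j :=
          Finset.sum_congr rfl (fun j _ => Zhigh t (p.1+1) (by omega) (by omega) j (by omega))
        have e2 : ∑ j, z t ⟨p.1, by omega⟩ j = ∑ j, y t ⟨p.1, by omega⟩ j :=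
          Finset.sum_congr rfl (fun j _ => Zlow t p.1 (by omega) le_rfl j (by omega))
        rw [e1, e2]
        have s1 := gt_sum2 (hy1 t) rfl (show p.1 < m+1 by omega) (by omega) (by omega)
        have s2 := gt_sum2 (hy1 t) rfl (show p.1+1 < m+1 by omega) (by omega) (by omega)
        have hva : splitVec m w p a b ⟨p.1, by omega⟩ = a := splitVec_eqa rfl
        have hvb : splitVec m w p a b ⟨p.1+1, by omega⟩ = b := splitVec_eqb rfl
        rw [hva] at s1
        rw [hvb] at s2
        have hfe : (w (⟨p.1, hi⟩ : Fin m) : ℝ) = ((a : ℝ) + (b : ℝ)) := by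
          rw [Fin.eta, ← hab]; push_cast; ring
        rw [hfe]
        linarith
      · have e1 : ∑ j, z t ⟨i+1, by omega⟩ j = ∑ j, y t ⟨i+1+1, by omega⟩ j :=
          Finset.sum_congr rfl (fun j _ => Zhigh t (i+1) (by omega) (by omega) j (by omega))
        have e2 : ∑ j, z t ⟨i, by omega⟩ j = ∑ j, y t ⟨i+1, by omega⟩ j :=
          Finset.sum_congr rfl (fun j _ => Zhigh t i (by omega) (by omega) j (by omega))
        rw [e1, e2]
        have hs := gt_sum2 (hy1 t) rfl (show i+1 < m+1 by omega) (by omega) (by omega)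
        have hv : splitVec m w p a b ⟨i+1, by omega⟩ = w ⟨i+1-1, by omega⟩ :=
          splitVec_gt (show p.1+1 < i+1 by omega) (show i+1-1 < m by omega)
        rw [hv] at hs
        rw [hs]
        rfl
  · -- integrality
    intro t i j
    rcases i with ⟨i, hi2⟩
    rcases le_or_gt i p.1 with hle | hgt
    · obtain ⟨v, hv⟩ := hy2 t ⟨i, by omega⟩ j
      exact ⟨v, by rw [Zlow t i hi2 hle j (by omega)]; exact hv⟩
    · obtain ⟨v, hv⟩ := hy2 t ⟨i+1, by omega⟩ j
      exact ⟨v, by rw [Zhigh t i hi2 hgt j (by omega)]; exact hv⟩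
  · -- sum decomposition
    intro i j
    rcases i with ⟨i, hi2⟩
    rcases le_or_gt i p.1 with hle | hgt
    · have e := hy3 ⟨i, by omega⟩ j
      rw [Elow i (by omega) hle j (by omega)] at e
      have e2 : ∑ t, z t ⟨i, hi2⟩ j = ∑ t, y t ⟨i, by omega⟩ j :=
        Finset.sum_congr rfl (fun t _ => Zlow t i hi2 hle j (by omega))
      rw [e2]
      exact e
    · have e := hy3 ⟨i+1, by omega⟩ j
      rw [Ehigh (i+1) (by omega) (by omega) j (by omega)] at e
      have e2 : ∑ t, z t ⟨i, hi2⟩ j = ∑ t, y t ⟨i+1, by omega⟩ j :=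
        Finset.sum_congr rfl (fun t _ => Zhigh t i hi2 hgt j (by omega))
      rw [e2]
      exact e

lemma mono_surj_fin_id {m : ℕ} (g : Fin m → Fin m) (hm : Monotone g)
    (hs : Function.Surjective g) : ∀ i, g i = i := by
  have hinj : Function.Injective g := Finite.injective_iff_surjective.2 hs
  have hsm : StrictMono g := hm.strictMono_of_injective hinj
  suffices h : ∀ q : ℕ, ∀ hq : q < m, g ⟨q, hq⟩ = ⟨q, hq⟩ by
    intro i
    rcases i with ⟨q, hq⟩
    exact h q hq
  intro q
  induction q using Nat.strong_induction_on with
  | _ q IH =>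
    intro hq
    rcases lt_trichotomy (g ⟨q, hq⟩) ⟨q, hq⟩ with hl | he | hg
    · have h2 : g (g ⟨q, hq⟩) = g ⟨q, hq⟩ := by
        have hlt : ((g ⟨q, hq⟩ : Fin m) : ℕ) < q := hl
        have := IH (g ⟨q, hq⟩).1 hlt (g ⟨q, hq⟩).isLt
        rwa [Fin.eta] at this
      exact hinj h2
    · exact he
    · obtain ⟨j, hj⟩ := hs ⟨q, hq⟩
      rcases lt_trichotomy j ⟨q, hq⟩ with hc | hc | hc
      · have hjq : (j:ℕ) < q := hc
        have h3 := IH j.1 hjq j.isLt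
        rw [Fin.eta] at h3
        rw [h3] at hj
        exact absurd (hj ▸ hc) (lt_irrefl _)
      · rw [hc] at hj
        exact hj
      · have h4 := hsm hc
        rw [hj] at h4
        exact absurd (lt_trans hg h4) (lt_irrefl _)

set_option maxHeartbeats 2000000 in
theorem refine_aux (n : ℕ) (lam mu : Fin n → ℤ) :
    ∀ r m m' (w : Fin m → ℤ) (w' : Fin m' → ℤ), m' = m + r → (∀ i, 0 ≤ w' i) →
      Refines w w' → HasIDP m' n lam mu w' → HasIDP m n lam mu w := by
  intro r
  induction r with
  | zero =>
    intro m m' w w' hm hw' href hidp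
    have hm' : m' = m := by omega
    subst hm'
    obtain ⟨g, hgm, hgs, hgw⟩ := href
    have hgid := mono_surj_fin_id g hgm hgs
    have hww : w = w' := by
      funext s
      rw [hgw s]
      have hfilter : univ.filter (fun t => g t = s) = {s} := by
        ext t
        simp only [mem_filter, mem_univ, true_and, mem_singleton, hgid t]
      rw [hfilter, Finset.sum_singleton]
    rw [hww]
    exact hidp
  | succ r ih =>
    intro m m' w w' hm hw' href hidp
    obtain ⟨g, hgm, hgs, hgw⟩ := href
    have hcard : Fintype.card (Fin m) < Fintype.card (Fin m') := by
      simp only [Fintype.card_fin]; omega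
    obtain ⟨t1, t2, hne, heq⟩ := Fintype.exists_ne_map_eq_of_card_lt g hcard
    set F := univ.filter (fun t => g t = g t1) with hFdef
    have ht1F : t1 ∈ F := by simp [hFdef]
    have ht2F : t2 ∈ F := by simp [hFdef, ← heq]
    have hFne : F.Nonempty := ⟨t1, ht1F⟩
    obtain ⟨u, huF, humin⟩ : ∃ u, u ∈ F ∧ ∀ t ∈ F, u ≤ t :=
      ⟨F.min' hFne, F.min'_mem hFne, fun t ht => F.min'_le t ht⟩
    have hgu : g u = g t1 := by
      have := huF
      simp only [hFdef, mem_filter, mem_univ, true_and] at this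
      exact this
    obtain ⟨v, hvF, hvu⟩ : ∃ v, v ∈ F ∧ v ≠ u := by
      rcases eq_or_ne t1 u with h | h
      · refine ⟨t2, ht2F, ?_⟩
        rw [← h]
        exact fun hh => hne hh.symm
      · exact ⟨t1, ht1F, h⟩
    have hgv : g v = g t1 := by
      have := hvF
      simp only [hFdef, mem_filter, mem_univ, true_and] at this
      exact this
    have hgt1lt : ((g t1 : Fin m) : ℕ) < m := (g t1).isLt
    have ha : (0:ℤ) ≤ w' u := hw' u
    have hsumF : w (g t1) = ∑ t ∈ F, w' t := hgw (g t1)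
    have herase : ∑ t ∈ F.erase u, w' t + w' u = ∑ t ∈ F, w' t :=
      Finset.sum_erase_add F w' huF
    have hbsum : w (g t1) - w' u = ∑ t ∈ F.erase u, w' t := by
      rw [hsumF, ← herase]; ring
    have hb : (0:ℤ) ≤ w (g t1) - w' u := by
      rw [hbsum]
      exact Finset.sum_nonneg fun t _ => hw' t
    have hab : w' u + (w (g t1) - w' u) = w (g t1) := by ring
    -- the refined coarse map
    set gval : Fin m' → ℕ := fun t =>
      if (g t : ℕ) < (g t1 : ℕ) then (g t : ℕ)
      else if (g t : ℕ) = (g t1 : ℕ) then (if t = u then (g t1 : ℕ) else (g t1 : ℕ)+1)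
      else (g t : ℕ)+1 with hgvaldef
    have hgvlt : ∀ t, gval t < m+1 := by
      intro t
      have h1 := (g t).isLt
      have h2 := (g t1).isLt
      simp only [hgvaldef]
      split_ifs <;> omega
    set g'' : Fin m' → Fin (m+1) := fun t => ⟨gval t, hgvlt t⟩ with hg''def
    have hg''mono : Monotone g'' := by
      intro t t' htt'
      have hgmv : (g t : ℕ) ≤ (g t' : ℕ) := hgm htt'
      rw [Fin.le_def]
      show gval t ≤ gval t'
      simp only [hgvaldef]
      split_ifs <;> try omega
      all_goals
        exfalso
        have htu : t' = u := by assumption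
        have hnu : ¬ (t = u) := by assumption
        have hval : ((g t : Fin m) : ℕ) = ((g t1 : Fin m) : ℕ) := by assumption
        have htF2 : t ∈ F := by
          simp only [hFdef, mem_filter, mem_univ, true_and]
          exact Fin.ext hval
        have h2 := humin t htF2
        have h3 : t = u := le_antisymm (htu ▸ htt') h2
        exact hnu h3
    have hg''surj : Function.Surjective g'' := by
      rintro ⟨sv, hsv⟩
      rcases Nat.lt_trichotomy sv (g t1 : ℕ) with hlt | heqv | hgt
      · obtain ⟨t, ht⟩ := hgs ⟨sv, by omega⟩
        refine ⟨t, ?_⟩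
        have htv : (g t : ℕ) = sv := by rw [ht]
        apply Fin.ext
        show gval t = sv
        simp only [hgvaldef]
        rw [if_pos (by omega)]
        exact htv
      · refine ⟨u, ?_⟩
        apply Fin.ext
        show gval u = sv
        have hguv : (g u : ℕ) = (g t1 : ℕ) := by rw [hgu]
        simp only [hgvaldef]
        rw [if_neg (by omega), if_pos (by omega), if_pos trivial]
        omega
      · by_cases hsv1 : sv = (g t1 : ℕ) + 1
        · refine ⟨v, ?_⟩
          apply Fin.ext
          show gval v = sv
          have hgvv : (g v : ℕ) = (g t1 : ℕ) := by rw [hgv]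
          simp only [hgvaldef]
          rw [if_neg (by omega), if_pos (by omega), if_neg hvu]
          omega
        · obtain ⟨t, ht⟩ := hgs ⟨sv - 1, by omega⟩
          refine ⟨t, ?_⟩
          have htv : (g t : ℕ) = sv - 1 := by rw [ht]
          apply Fin.ext
          show gval t = sv
          simp only [hgvaldef]
          rw [if_neg (by omega), if_neg (by omega)]
          omega
    have hrefines : ∀ s : Fin (m+1),
        splitVec m w (g t1) (w' u) (w (g t1) - w' u) s
          = ∑ t ∈ univ.filter (fun t => g'' t = s), w' t := by
      rintro ⟨sv, hsv⟩
      rcases Nat.lt_trichotomy sv (g t1 : ℕ) with hlt | heqv | hgt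
      · rw [splitVec_lt (i := ⟨sv,hsv⟩) hlt (show sv < m by omega)]
        have hfe : univ.filter (fun t => g'' t = ⟨sv,hsv⟩)
            = univ.filter (fun t => g t = ⟨sv, by omega⟩) := by
          ext t
          simp only [mem_filter, mem_univ, true_and, Fin.ext_iff]
          show gval t = sv ↔ (g t : ℕ) = sv
          simp only [hgvaldef]
          split_ifs <;> omega
        rw [hfe]
        exact hgw ⟨sv, by omega⟩
      · rw [splitVec_eqa (i := ⟨sv,hsv⟩) heqv]
        have hfe : univ.filter (fun t => g'' t = ⟨sv,hsv⟩) = {u} := by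
          ext t
          simp only [mem_filter, mem_univ, true_and, mem_singleton, Fin.ext_iff]
          show gval t = sv ↔ (t : ℕ) = (u : ℕ)
          simp only [hgvaldef]
          split_ifs with h1 h2 h3
          · constructor
            · intro hh; exfalso; omega
            · intro hh
              have h4 : t = u := Fin.ext hh
              subst h4
              rw [hgu] at h1; omega
          · exact iff_of_true (by omega) (by rw [h3])
          · refine iff_of_false (by omega) (fun hh => h3 (Fin.ext hh))
          · refine iff_of_false (by omega) ?_
            intro hh
            have h4 : t = u := Fin.ext hh
            subst h4
            rw [hgu] at h2; exact h2 rfl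
        rw [hfe, Finset.sum_singleton]
      · by_cases hsv1 : sv = (g t1 : ℕ) + 1
        · rw [splitVec_eqb (i := ⟨sv,hsv⟩) hsv1]
          have hfe : univ.filter (fun t => g'' t = ⟨sv,hsv⟩) = F.erase u := by
            ext t
            simp only [mem_filter, mem_univ, true_and, Finset.mem_erase,
              hFdef, Fin.ext_iff]
            show gval t = sv ↔ (t ≠ u ∧ (g t : ℕ) = (g t1 : ℕ))
            simp only [hgvaldef]
            split_ifs with h1 h2 h3
            · constructor
              · intro hh; exfalso; omega
              · rintro ⟨hh1, hh2⟩; exfalso; omega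
            · constructor
              · intro hh; exfalso; omega
              · rintro ⟨hh1, hh2⟩; exact absurd h3 hh1
            · exact iff_of_true (by omega) ⟨h3, h2⟩
            · constructor
              · intro hh; exfalso; omega
              · rintro ⟨hh1, hh2⟩; exfalso; omega
          rw [hfe, ← hbsum]
        · rw [splitVec_gt (i := ⟨sv,hsv⟩) (show ((g t1 : Fin m) : ℕ) + 1 < sv by omega) (show sv - 1 < m by omega)]
          have hfe : univ.filter (fun t => g'' t = ⟨sv,hsv⟩)
              = univ.filter (fun t => g t = ⟨sv - 1, by omega⟩) := by
            ext t
            simp only [mem_filter, mem_univ, true_and, Fin.ext_iff]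
            show gval t = sv ↔ (g t : ℕ) = sv - 1
            simp only [hgvaldef]
            split_ifs <;> omega
          rw [hfe]
          exact hgw ⟨sv - 1, by omega⟩
    have hidp'' : HasIDP (m+1) n lam mu (splitVec m w (g t1) (w' u) (w (g t1) - w' u)) :=
      ih (m+1) m' (splitVec m w (g t1) (w' u) (w (g t1) - w' u)) w' (by omega) hw'
        ⟨g'', hg''mono, hg''surj, hrefines⟩ hidp
    exact split_idp n lam mu m w (g t1) (w' u) (w (g t1) - w' u) ha hb hab hidp''

/-- If `w'` refines `w` and `P_{λ/μ,w'}` has the integer decomposition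
property, then so does `P_{λ/μ,w}`. -/
theorem statement5 (n : ℕ) (hn : 1 ≤ n) (lam mu : Fin n → ℤ)
    (hlam : Antitone lam) (hmu : Antitone mu)
    (hmu0 : ∀ j, 0 ≤ mu j) (hge : ∀ j, mu j ≤ lam j)
    (m m' : ℕ) (w : Fin m → ℤ) (w' : Fin m' → ℤ)
    (hw : ∀ i, 0 ≤ w i) (hw' : ∀ i, 0 ≤ w' i)
    (hsum : ∑ i, w i = ∑ j, lam j - ∑ j, mu j)
    (hsum' : ∑ i, w' i = ∑ j, lam j - ∑ j, mu j)
    (href : Refines w w')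
    (hidp : HasIDP m' n lam mu w') :
    HasIDP m n lam mu w := by
  obtain ⟨g, hgm, hgs, hgw⟩ := href
  have hle : m ≤ m' := by
    have := Fintype.card_le_of_surjective g hgs
    simpa using this
  exact refine_aux n lam mu (m' - m) m m' w w' (by omega) hw' ⟨g, hgm, hgs, hgw⟩ hidp
end

section
/- Let w and w' be nonnegative integer weight vectors with w' a refinement of w, both of total sum |λ|−|μ|. Then the (finite) number of integral GT-patterns of shape λ/μ and weight w is at most the number of integral GT-patterns of shape λ/μ and weight w'. -/
open Finset

noncomputable def dseq {n : ℕ} (a b : Fin n → ℝ) (k : ℕ) : ℝ :=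
  if h : k < n then b ⟨k, h⟩ - a ⟨k, h⟩ else 0

noncomputable def pref {n : ℕ} (a b : Fin n → ℝ) (k : ℕ) : ℝ :=
  ∑ l ∈ Finset.range k, dseq a b l

noncomputable def interp {n : ℕ} (a b : Fin n → ℝ) (c : ℝ) (j : Fin n) : ℝ :=
  a j + (min c (pref a b ((j : ℕ) + 1)) - min c (pref a b (j : ℕ)))

section interp
variable {n : ℕ} {a b : Fin n → ℝ} {c c' : ℝ}

lemma dseq_nonneg (hab : ∀ j, a j ≤ b j) (k : ℕ) : 0 ≤ dseq a b k := by
  unfold dseq; split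
  · simpa using sub_nonneg.2 (hab _)
  · exact le_refl 0

lemma dseq_coe (j : Fin n) : dseq a b (j : ℕ) = b j - a j := by
  simp [dseq, j.isLt]

lemma pref_succ (k : ℕ) : pref a b (k + 1) = pref a b k + dseq a b k := by
  simp [pref, Finset.sum_range_succ]

lemma pref_mono (hab : ∀ j, a j ≤ b j) {k l : ℕ} (hkl : k ≤ l) :
    pref a b k ≤ pref a b l :=
  Finset.sum_le_sum_of_subset_of_nonneg (Finset.range_subset_range.2 hkl)
    (fun i _ _ => dseq_nonneg hab i)

lemma pref_nonneg (hab : ∀ j, a j ≤ b j) (k : ℕ) : 0 ≤ pref a b k :=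
  Finset.sum_nonneg (fun i _ => dseq_nonneg hab i)

lemma pref_total : pref a b n = ∑ j, (b j - a j) := by
  rw [pref, ← Fin.sum_univ_eq_sum_range]
  exact Finset.sum_congr rfl (fun j _ => dseq_coe j)

lemma le_interp (hab : ∀ j, a j ≤ b j) (j : Fin n) : a j ≤ interp a b c j := by
  have := min_le_min (le_refl c) (pref_mono hab (Nat.le_succ (j : ℕ)))
  simp only [interp]; linarith

lemma interp_le (hab : ∀ j, a j ≤ b j) (j : Fin n) : interp a b c j ≤ b j := by
  have h1 : pref a b ((j:ℕ)+1) = pref a b (j:ℕ) + (b j - a j) := by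
    rw [pref_succ, dseq_coe]
  have := hab j
  simp only [interp, h1, min_def]
  split_ifs <;> linarith

lemma interp_mono (hab : ∀ j, a j ≤ b j) (hcc : c ≤ c') (j : Fin n) :
    interp a b c j ≤ interp a b c' j := by
  have h1 : pref a b ((j:ℕ)+1) = pref a b (j:ℕ) + (b j - a j) := by
    rw [pref_succ, dseq_coe]
  have := hab j
  simp only [interp, h1, min_def]
  split_ifs <;> linarith

lemma interp_zero (hab : ∀ j, a j ≤ b j) (j : Fin n) : interp a b 0 j = a j := by
  rw [interp, min_eq_left (pref_nonneg hab _), min_eq_left (pref_nonneg hab _)]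
  ring

lemma interp_top (hab : ∀ j, a j ≤ b j) (hc : ∑ j, (b j - a j) ≤ c) (j : Fin n) :
    interp a b c j = b j := by
  have hm : ∀ k, k ≤ n → min c (pref a b k) = pref a b k := fun k hk =>
    min_eq_right (le_trans (le_trans (pref_mono hab hk) (le_of_eq pref_total)) hc)
  rw [interp, hm _ j.isLt, hm _ (le_of_lt j.isLt), pref_succ, dseq_coe]
  ring

lemma sum_interp (hab : ∀ j, a j ≤ b j) (h0 : 0 ≤ c) (hc : c ≤ ∑ j, (b j - a j)) :
    ∑ j, interp a b c j = (∑ j, a j) + c := by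
  have key : ∑ j : Fin n, (min c (pref a b ((j:ℕ)+1)) - min c (pref a b (j:ℕ))) = c := by
    rw [Fin.sum_univ_eq_sum_range (fun k => min c (pref a b (k+1)) - min c (pref a b k)) n,
      Finset.sum_range_sub (fun k => min c (pref a b k)) n]
    have h1 : pref a b 0 = 0 := by simp [pref]
    have h2 : min c (pref a b n) = c := min_eq_left (by rw [pref_total]; exact hc)
    rw [h1, h2, min_eq_right h0]
    ring
  simp only [interp, Finset.sum_add_distrib, key]

lemma interp_isInt (ha : ∀ j, ∃ z : ℤ, a j = z) (hb : ∀ j, ∃ z : ℤ, b j = z)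
    (hcz : ∃ z : ℤ, c = z) (j : Fin n) : ∃ z : ℤ, interp a b c j = z := by
  have hpref : ∀ k, ∃ z : ℤ, pref a b k = z := by
    intro k
    refine Finset.sum_induction _ (fun r => ∃ z : ℤ, r = (z : ℝ)) ?_ ⟨0, by simp⟩ ?_
    · rintro u v ⟨zu, rfl⟩ ⟨zv, rfl⟩; exact ⟨zu + zv, by push_cast; ring⟩
    · intro i _
      unfold dseq; split
      · obtain ⟨za, hza⟩ := ha _; obtain ⟨zb, hzb⟩ := hb _
        exact ⟨zb - za, by rw [hza, hzb]; push_cast; ring⟩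
      · exact ⟨0, by simp⟩
  obtain ⟨zc, hzc⟩ := hcz
  obtain ⟨z1, h1⟩ := hpref ((j:ℕ)+1)
  obtain ⟨z2, h2⟩ := hpref (j:ℕ)
  obtain ⟨za, hza⟩ := ha j
  exact ⟨za + (min zc z1 - min zc z2), by rw [interp, hza, hzc, h1, h2]; push_cast; ring⟩

end interp

section refin
variable {m m' : ℕ} {g : Fin m' → Fin m} {w : Fin m → ℤ} {w' : Fin m' → ℤ}

def cIf (g : Fin m' → Fin m) (w' : Fin m' → ℤ) (t : Fin m') : ℤ :=
  ∑ u ∈ Finset.univ.filter (fun u => g u = g t ∧ u ≤ t), w' u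

def cPf (g : Fin m' → Fin m) (w' : Fin m' → ℤ) (t : Fin m') : ℤ :=
  ∑ u ∈ Finset.univ.filter (fun u => g u = g t ∧ u < t), w' u

lemma cIf_split (t : Fin m') : cIf g w' t = w' t + cPf g w' t := by
  have hins : Finset.univ.filter (fun u => g u = g t ∧ u ≤ t)
      = insert t (Finset.univ.filter (fun u => g u = g t ∧ u < t)) := by
    ext u
    simp only [Finset.mem_filter, Finset.mem_insert, Finset.mem_univ, true_and]
    constructor
    · rintro ⟨h1, h2⟩
      rcases eq_or_lt_of_le h2 with h | h
      · exact Or.inl h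
      · exact Or.inr ⟨h1, h⟩
    · rintro (rfl | ⟨h1, h2⟩)
      · exact ⟨rfl, le_refl _⟩
      · exact ⟨h1, le_of_lt h2⟩
  rw [cIf, hins, Finset.sum_insert (by simp)]
  rfl

lemma cPf_nonneg (hw' : ∀ i, 0 ≤ w' i) (t : Fin m') : 0 ≤ cPf g w' t :=
  Finset.sum_nonneg fun u _ => hw' u

lemma cIf_nonneg (hw' : ∀ i, 0 ≤ w' i) (t : Fin m') : 0 ≤ cIf g w' t :=
  Finset.sum_nonneg fun u _ => hw' u

lemma cIf_le (hw' : ∀ i, 0 ≤ w' i)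
    (hgw : ∀ s : Fin m, w s = ∑ t ∈ Finset.univ.filter (fun t => g t = s), w' t)
    (t : Fin m') : cIf g w' t ≤ w (g t) := by
  rw [hgw]
  refine Finset.sum_le_sum_of_subset_of_nonneg ?_ fun u _ _ => hw' u
  intro u hu
  simp only [Finset.mem_filter, Finset.mem_univ, true_and] at hu ⊢
  exact hu.1

lemma cIf_complete
    (hgw : ∀ s : Fin m, w s = ∑ t ∈ Finset.univ.filter (fun t => g t = s), w' t)
    (t : Fin m') (h : ∀ u, g u = g t → u ≤ t) : cIf g w' t = w (g t) := by
  rw [hgw, cIf]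
  congr 1
  ext u
  simp only [Finset.mem_filter, Finset.mem_univ, true_and]
  exact ⟨fun hu => hu.1, fun hu => ⟨hu, h u hu⟩⟩

lemma g_step (hgm : Monotone g) (hgs : Function.Surjective g) (p q : Fin m')
    (hpq : (p : ℕ) + 1 = (q : ℕ)) (hne : g p ≠ g q) :
    ((g q) : ℕ) = ((g p) : ℕ) + 1 := by
  have hle : g p ≤ g q := hgm (by rw [Fin.le_def]; omega)
  have hlt : ((g p) : ℕ) < ((g q) : ℕ) := by
    rcases lt_or_eq_of_le hle with h | h
    · exact Fin.lt_def.1 h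
    · exact absurd h hne
  obtain ⟨u, hu⟩ := hgs ⟨(g p : ℕ) + 1, lt_of_le_of_lt hlt (g q).isLt⟩
  have hval : ((g u) : ℕ) = (g p : ℕ) + 1 := by rw [hu]
  rcases le_or_gt u p with h | h
  · have h2 := Fin.le_def.1 (hgm h)
    omega
  · have h2 : q ≤ u := by rw [Fin.le_def]; rw [Fin.lt_def] at h; omega
    have h3 := Fin.le_def.1 (hgm h2)
    omega

lemma g_zero (hgm : Monotone g) (hgs : Function.Surjective g) (t : Fin m')
    (h : (t : ℕ) = 0) : ((g t) : ℕ) = 0 := by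
  obtain ⟨u, hu⟩ := hgs ⟨0, (g t).pos⟩
  have := hgm (show t ≤ u by rw [Fin.le_def]; omega)
  rw [hu, Fin.le_def] at this
  simpa using this

end refin

noncomputable def fmap {m m' n : ℕ} (g : Fin m' → Fin m) (cc : Fin m' → ℝ)
    (mu : Fin n → ℤ) (x : Fin (m + 1) → Fin n → ℝ) : Fin (m' + 1) → Fin n → ℝ :=
  Fin.cases (fun j => ((mu j : ℤ) : ℝ))
    (fun t => interp (x (g t).castSucc) (x (g t).succ) (cc t))

lemma fmap_zero {m m' n : ℕ} (g : Fin m' → Fin m) (cc : Fin m' → ℝ)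
    (mu : Fin n → ℤ) (x : Fin (m + 1) → Fin n → ℝ) (j : Fin n) :
    fmap g cc mu x 0 j = (mu j : ℝ) := by
  simp [fmap]

lemma fmap_succ {m m' n : ℕ} (g : Fin m' → Fin m) (cc : Fin m' → ℝ)
    (mu : Fin n → ℤ) (x : Fin (m + 1) → Fin n → ℝ) (t : Fin m') (j : Fin n) :
    fmap g cc mu x t.succ j = interp (x (g t).castSucc) (x (g t).succ) (cc t) j := by
  simp [fmap]

/-- If `w'` refines `w`, then the number of integral GT-patterns of shape
`λ/μ` and weight `w` is at most the number of integral GT-patterns of shape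
`λ/μ` and weight `w'`. -/
theorem statement6 (n : ℕ) (hn : 1 ≤ n) (lam mu : Fin n → ℤ)
    (hlam : Antitone lam) (hmu : Antitone mu)
    (hmu0 : ∀ j, 0 ≤ mu j) (hge : ∀ j, mu j ≤ lam j)
    (m m' : ℕ) (w : Fin m → ℤ) (w' : Fin m' → ℤ)
    (hw : ∀ i, 0 ≤ w i) (hw' : ∀ i, 0 ≤ w' i)
    (hsum : ∑ i, w i = ∑ j, lam j - ∑ j, mu j)
    (hsum' : ∑ i, w' i = ∑ j, lam j - ∑ j, mu j)
    (href : Refines w w') :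
    {x : Fin (m + 1) → Fin n → ℝ |
        x ∈ gtPolytope m n lam mu w ∧ ∀ i j, ∃ z : ℤ, x i j = (z : ℝ)}.ncard ≤
    {x : Fin (m' + 1) → Fin n → ℝ |
        x ∈ gtPolytope m' n lam mu w' ∧ ∀ i j, ∃ z : ℤ, x i j = (z : ℝ)}.ncard := by
  classical
  obtain ⟨g, hgm, hgs, hgw⟩ := href
  set F := fmap g (fun t => ((cIf g w' t : ℤ) : ℝ)) mu with hFdef
  -- main construction: F maps the coarse set into the fine set, and on complete
  -- blocks the top fine row recovers the coarse rows
  have main : ∀ x ∈ {x : Fin (m + 1) → Fin n → ℝ |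
        x ∈ gtPolytope m n lam mu w ∧ ∀ i j, ∃ z : ℤ, x i j = (z : ℝ)},
      ((F x ∈ gtPolytope m' n lam mu w' ∧ ∀ i j, ∃ z : ℤ, F x i j = (z : ℝ)) ∧
      (∀ t : Fin m', (∀ u, g u = g t → u ≤ t) → ∀ j, F x t.succ j = x (g t).succ j)) := by
    intro x hx
    obtain ⟨hxp, hxint⟩ := hx
    obtain ⟨⟨hgt1, hgt2⟩, hx0, hxl, hxw⟩ := hxp
    have hab : ∀ s : Fin m, ∀ j, x s.castSucc j ≤ x s.succ j := fun s j => hgt1 s j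
    have htot : ∀ s : Fin m, ∑ j, (x s.succ j - x s.castSucc j) = (w s : ℝ) := by
      intro s; rw [Finset.sum_sub_distrib]; exact hxw s
    have htopRow : ∀ t : Fin m', (∀ u, g u = g t → u ≤ t) →
        ∀ j, F x t.succ j = x (g t).succ j := by
      intro t ht j
      rw [hFdef, fmap_succ]
      refine interp_top (hab (g t)) ?_ j
      rw [htot (g t), cIf_complete hgw t ht]
    have hcast : ∀ t : Fin m', ∀ j,
        F x t.castSucc j
          = interp (x (g t).castSucc) (x (g t).succ) ((cPf g w' t : ℝ)) j := by
      rintro ⟨tv, htv⟩ j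
      match tv, htv with
      | 0, htv =>
        have e0 : (⟨0, htv⟩ : Fin m').castSucc = 0 := by ext; simp
        have hP0 : cPf g w' ⟨0, htv⟩ = 0 := by
          refine Finset.sum_eq_zero ?_
          intro u hu
          simp only [Finset.mem_filter, Finset.mem_univ, true_and, Fin.lt_def] at hu
          omega
        have hg0 := g_zero hgm hgs ⟨0, htv⟩ rfl
        have e1 : (g (⟨0, htv⟩ : Fin m')).castSucc = (0 : Fin (m + 1)) := by
          ext; simpa using hg0
        rw [e0, hP0, Int.cast_zero, interp_zero (hab _) j, e1, hx0 j, hFdef, fmap_zero]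
      | pv + 1, htv =>
        set p : Fin m' := ⟨pv, Nat.lt_of_succ_lt htv⟩ with hp
        have hpval : (p : ℕ) = pv := rfl
        have htval : ((⟨pv + 1, htv⟩ : Fin m') : ℕ) = pv + 1 := rfl
        have hps : (⟨pv + 1, htv⟩ : Fin m').castSucc = p.succ := rfl
        rw [hps, hFdef, fmap_succ]
        by_cases hgg : g p = g ⟨pv + 1, htv⟩
        · have hPP : cIf g w' p = cPf g w' ⟨pv + 1, htv⟩ := by
            unfold cIf cPf
            rw [hgg]
            refine Finset.sum_congr ?_ fun _ _ => rfl
            ext u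
            simp only [Finset.mem_filter, Finset.mem_univ, true_and, Fin.le_def,
              Fin.lt_def, hpval, htval]
            constructor
            · rintro ⟨h1, h2⟩; exact ⟨h1, by omega⟩
            · rintro ⟨h1, h2⟩; exact ⟨h1, by omega⟩
          rw [hgg, hPP]
        · have hst := g_step hgm hgs p ⟨pv + 1, htv⟩ rfl hgg
          have hcomp : ∀ u, g u = g p → u ≤ p := by
            intro u hu
            by_contra hnot
            rw [Fin.le_def] at hnot
            have h1 : (⟨pv + 1, htv⟩ : Fin m') ≤ u := by rw [Fin.le_def]; omega
            have h2 := Fin.le_def.1 (hgm h1)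
            have hval : ((g u) : ℕ) = ((g p) : ℕ) := by rw [hu]
            omega
          have hcIp : cIf g w' p = w (g p) := cIf_complete hgw p hcomp
          have hbp : interp (x (g p).castSucc) (x (g p).succ) ((cIf g w' p : ℤ) : ℝ) j
              = x (g p).succ j := by
            refine interp_top (hab _) ?_ j
            rw [htot (g p), hcIp]
          have hP0 : cPf g w' ⟨pv + 1, htv⟩ = 0 := by
            refine Finset.sum_eq_zero ?_
            intro u hu
            exfalso
            simp only [Finset.mem_filter, Finset.mem_univ, true_and, Fin.lt_def,
              htval] at hu
            have h1 : u ≤ p := by rw [Fin.le_def]; omega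
            have h2 := Fin.le_def.1 (hgm h1)
            have hval : ((g u) : ℕ) = ((g ⟨pv + 1, htv⟩ : Fin m)) := by rw [hu.1]
            omega
          rw [hbp, hP0, Int.cast_zero, interp_zero (hab _) j]
          congr 1
          ext
          simp only [Fin.val_succ, Fin.coe_castSucc]
          omega
    have hle1 : ∀ t : Fin m', ((cPf g w' t : ℤ) : ℝ) ≤ ((cIf g w' t : ℤ) : ℝ) := by
      intro t
      have h1 := cIf_split (g := g) (w' := w') t
      have h2 := hw' t
      exact_mod_cast by omega
    -- the three chained inequalities
    have hlow : ∀ t : Fin m', ∀ j, x (g t).castSucc j ≤ F x t.castSucc j := by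
      intro t j; rw [hcast t j]; exact le_interp (hab _) j
    have hmid : ∀ t : Fin m', ∀ j, F x t.castSucc j ≤ F x t.succ j := by
      intro t j
      rw [hcast t j, hFdef, fmap_succ]
      exact interp_mono (hab _) (hle1 t) j
    have hhigh : ∀ t : Fin m', ∀ j, F x t.succ j ≤ x (g t).succ j := by
      intro t j; rw [hFdef, fmap_succ]; exact interp_le (hab _) j
    refine ⟨⟨⟨⟨fun t j => hmid t j, ?_⟩, ?_, ?_, ?_⟩, ?_⟩, htopRow⟩
    · -- diagonal inequalities
      intro t j h
      calc F x t.succ ⟨(j : ℕ) + 1, h⟩ ≤ x (g t).succ ⟨(j : ℕ) + 1, h⟩ := hhigh t _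
        _ ≤ x (g t).castSucc j := hgt2 (g t) j h
        _ ≤ F x t.castSucc j := hlow t j
    · -- bottom row
      intro j; rw [hFdef, fmap_zero]
    · -- top row
      intro j
      rcases Nat.eq_zero_or_pos m' with hm' | hm'
      · have hm : m = 0 := by
          by_contra hm
          obtain ⟨u, -⟩ := hgs ⟨0, Nat.pos_of_ne_zero hm⟩
          have := u.isLt
          omega
        have h0' : (Fin.last m' : Fin (m' + 1)) = 0 := by ext; simp [hm']
        have h0m : (Fin.last m : Fin (m + 1)) = 0 := by ext; simp [hm]
        rw [h0', hFdef, fmap_zero, ← hxl j, h0m, hx0 j]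
      · set t : Fin m' := ⟨m' - 1, by omega⟩ with ht
        have htval : (t : ℕ) = m' - 1 := rfl
        have hlast : (Fin.last m') = t.succ := by
          ext; simp only [Fin.val_last, Fin.val_succ]; omega
        have hule : ∀ u : Fin m', u ≤ t := by
          intro u
          rw [Fin.le_def]
          have := u.isLt
          omega
        have hcomp : ∀ u : Fin m', g u = g t → u ≤ t := fun u _ => hule u
        have htop : ∀ v : Fin m, v ≤ g t := by
          intro v
          obtain ⟨u, hu⟩ := hgs v
          rw [← hu]
          exact hgm (hule u)
        have hmpos : 0 < m := (g t).pos
        have hsucc : (g t).succ = Fin.last m := by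
          have h1 := Fin.le_def.1 (htop ⟨m - 1, Nat.sub_lt hmpos Nat.one_pos⟩)
          have h0 : ((⟨m - 1, Nat.sub_lt hmpos Nat.one_pos⟩ : Fin m) : ℕ) = m - 1 := rfl
          rw [h0] at h1
          have h2 := (g t).isLt
          ext
          simp only [Fin.val_succ, Fin.val_last]
          omega
        rw [hlast, ← hxl j, ← hsucc]
        exact htopRow t hcomp j
    · -- weights
      intro t
      have hsucc : ∑ j, F x t.succ j
          = (∑ j, x (g t).castSucc j) + ((cIf g w' t : ℤ) : ℝ) := by
        rw [hFdef]
        rw [Finset.sum_congr rfl fun j _ => fmap_succ g _ mu x t j]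
        refine sum_interp (hab _) ?_ ?_
        · exact_mod_cast cIf_nonneg hw' t
        · rw [htot (g t)]; exact_mod_cast cIf_le hw' hgw t
      have hcastsum : ∑ j, F x t.castSucc j
          = (∑ j, x (g t).castSucc j) + ((cPf g w' t : ℤ) : ℝ) := by
        rw [Finset.sum_congr rfl fun j _ => hcast t j]
        refine sum_interp (hab _) ?_ ?_
        · exact_mod_cast cPf_nonneg hw' t
        · rw [htot (g t)]
          have h1 := cIf_split (g := g) (w' := w') t
          have h2 := hw' t
          have h3 := cIf_le hw' hgw t
          exact_mod_cast by omega
      rw [hsucc, hcastsum]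
      have h4 : (cIf g w' t : ℝ) = (w' t : ℝ) + (cPf g w' t : ℝ) := by
        exact_mod_cast cIf_split (g := g) (w' := w') t
      linarith
    · -- integrality
      intro i j
      rcases i with ⟨iv, hiv⟩
      match iv, hiv with
      | 0, hiv =>
        refine ⟨mu j, ?_⟩
        have e0 : (⟨0, hiv⟩ : Fin (m' + 1)) = 0 := by ext; simp
        rw [e0, hFdef, fmap_zero]
      | iv + 1, hiv =>
        have e1 : (⟨iv + 1, hiv⟩ : Fin (m' + 1))
            = (⟨iv, Nat.lt_of_succ_lt_succ hiv⟩ : Fin m').succ := rfl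
        rw [e1, hFdef, fmap_succ]
        exact interp_isInt (fun j' => hxint _ j') (fun j' => hxint _ j')
          ⟨cIf g w' _, rfl⟩ j
  -- injectivity
  have hinj : Set.InjOn F {x : Fin (m + 1) → Fin n → ℝ |
      x ∈ gtPolytope m n lam mu w ∧ ∀ i j, ∃ z : ℤ, x i j = (z : ℝ)} := by
    intro x hx y hy hxy
    funext s j
    rcases s with ⟨sv, hsv⟩
    match sv, hsv with
    | 0, hsv =>
      have e0 : (⟨0, hsv⟩ : Fin (m + 1)) = 0 := by ext; simp
      rw [e0, hx.1.2.1 j, hy.1.2.1 j]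
    | rv + 1, hsv =>
      set r : Fin m := ⟨rv, Nat.lt_of_succ_lt_succ hsv⟩ with hr
      have hre : (⟨rv + 1, hsv⟩ : Fin (m + 1)) = r.succ := rfl
      obtain ⟨u0, hu0⟩ := hgs r
      have hne : (Finset.univ.filter fun u => g u = r).Nonempty :=
        ⟨u0, by simp [hu0]⟩
      set u := (Finset.univ.filter fun u => g u = r).max' hne with hu
      have hgu : g u = r := by
        have := Finset.max'_mem _ hne
        rw [← hu] at this
        simpa using this
      have hmax : ∀ v, g v = g u → v ≤ u := by
        intro v hv
        refine Finset.le_max' _ v ?_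
        rw [hgu] at hv
        simp [hv]
      have h1 := (main x hx).2 u hmax j
      have h2 := (main y hy).2 u hmax j
      rw [hre, ← hgu, ← h1, ← h2, hxy]
  -- finiteness of the target set
  have hfin : {x : Fin (m' + 1) → Fin n → ℝ |
      x ∈ gtPolytope m' n lam mu w' ∧ ∀ i j, ∃ z : ℤ, x i j = (z : ℝ)}.Finite := by
    have hsub : {x : Fin (m' + 1) → Fin n → ℝ |
        x ∈ gtPolytope m' n lam mu w' ∧ ∀ i j, ∃ z : ℤ, x i j = (z : ℝ)}
        ⊆ (fun z : Fin (m' + 1) → Fin n → ℤ => fun i j => ((z i j : ℤ) : ℝ)) ''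
          (Set.Icc (fun _ j => mu j) (fun _ j => lam j)) := by
      intro x hx
      obtain ⟨⟨⟨hgt1, -⟩, hx0, hxl, -⟩, hxint⟩ := hx
      choose z hz using hxint
      have hmono : ∀ j, Monotone fun i => x i j := fun j =>
        Fin.monotone_iff_le_succ.2 fun i => hgt1 i j
      refine ⟨z, Set.mem_Icc.2 ⟨?_, ?_⟩, ?_⟩
      · intro i j
        have h1 : (mu j : ℝ) ≤ x i j := by rw [← hx0 j]; exact hmono j (Fin.zero_le i)
        rw [hz i j] at h1
        exact_mod_cast h1
      · intro i j
        have h1 : x i j ≤ (lam j : ℝ) := by rw [← hxl j]; exact hmono j (Fin.le_last i)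
        rw [hz i j] at h1
        exact_mod_cast h1
      · funext i j
        exact (hz i j).symm
    exact Set.Finite.subset (Set.Finite.image _ (Set.finite_Icc _ _)) hsub
  exact Set.ncard_le_ncard_of_injOn F (fun x hx => (main x hx).1) hinj hfin
end

section
/- Suppose the Gelfand–Tsetlin polytope P_{λ/μ,1} (weight 1 of length |λ|−|μ|) has an extreme point with a non-integer entry. Then: (a) for every weakly decreasing nonnegative integer vector λ⁺ obtained from λ (padded with a trailing zero if needed) by increasing exactly one coordinate by 1, the polytope P_{λ⁺/μ,1} (weight 1 of length |λ⁺|−|μ| = |λ|−|μ|+1) has an extreme point with a non-integer entry; and (b) for every weakly decreasing nonnegative integer vector μ₋ obtained from μ by decreasing exactly one coordinate by 1, the polytope P_{λ/μ₋,1} (weight 1 of length |λ|−|μ|+1) has an extreme point with a non-integer entry. -/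
open Finset

private lemma gtp_col_mono {m n : ℕ} {lam mu : Fin n → ℤ} {w : Fin m → ℤ}
    {x : Fin (m+1) → Fin n → ℝ} (hx : x ∈ gtPolytope m n lam mu w)
    (i : Fin (m+1)) (j : Fin n) : (mu j : ℝ) ≤ x i j := by
  obtain ⟨⟨h1, _⟩, h0, _, _⟩ := hx
  obtain ⟨k, hk⟩ := i
  induction k with
  | zero => exact le_of_eq (h0 j).symm
  | succ k ih =>
    have hk' : k < m + 1 := by omega
    refine (ih hk').trans ?_
    have := h1 ⟨k, by omega⟩ j
    simpa [Fin.castSucc_mk, Fin.succ_mk] using this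

private lemma mid_le {t s a b c : ℝ} (ht : 0 < t) (hs : 0 < s) (hts : t + s = 1)
    (h : t * a + s * b = c) (ha : c ≤ a) (hb : c ≤ b) : a = c ∧ b = c := by
  have key : t*(a-c) + s*(b-c) = 0 := by linear_combination h - c * hts
  have h1 := mul_nonneg ht.le (sub_nonneg.2 ha)
  have h2 := mul_nonneg hs.le (sub_nonneg.2 hb)
  have e1 : t * (a - c) = 0 := by linarith
  have e2 : s * (b - c) = 0 := by linarith
  exact ⟨by have := (mul_eq_zero.1 e1).resolve_left ht.ne'; linarith,
         by have := (mul_eq_zero.1 e2).resolve_left hs.ne'; linarith⟩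

private lemma mid_ge {t s a b c : ℝ} (ht : 0 < t) (hs : 0 < s) (hts : t + s = 1)
    (h : t * a + s * b = c) (ha : a ≤ c) (hb : b ≤ c) : a = c ∧ b = c := by
  have h' : t * (-a) + s * (-b) = -c := by linear_combination -h
  obtain ⟨e1, e2⟩ := mid_le ht hs hts h' (by linarith) (by linarith)
  exact ⟨by linarith, by linarith⟩

private lemma snoc_eval (n : ℕ) (f : Fin n → ℤ) (l : ℕ) (hl' : l < n+1) :
    (Fin.snoc f 0 : Fin (n+1) → ℤ) ⟨l, hl'⟩ = if h : l < n then f ⟨l, h⟩ else 0 := by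
  by_cases h : l < n <;> simp [Fin.snoc, h]

private lemma snoc_sum (n : ℕ) (f : Fin n → ℤ) :
    ∑ j, ((Fin.snoc f 0 : Fin (n+1) → ℤ) j : ℝ) = ∑ j, (f j : ℝ) := by
  rw [Fin.sum_univ_castSucc]
  simp

private lemma aux_a {n N : ℕ} {lam mu : Fin n → ℤ} {lamp : Fin (n+1) → ℤ}
    {x : Fin (N+1) → Fin n → ℝ}
    (hlam : Antitone lam) (hmu0 : ∀ j, 0 ≤ mu j) (hge : ∀ j, mu j ≤ lam j)
    (hxext : x ∈ Set.extremePoints ℝ (gtPolytope N n lam mu fun _ => 1))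
    (hlampA : Antitone lamp) (hlampN : ∀ j, 0 ≤ lamp j)
    (r : Fin (n+1)) (hr1 : lamp r = (Fin.snoc lam 0 : Fin (n+1) → ℤ) r + 1)
    (hr2 : ∀ i, i ≠ r → lamp i = (Fin.snoc lam 0 : Fin (n+1) → ℤ) i) :
    ∃ y ∈ Set.extremePoints ℝ
        (gtPolytope (N + 1) (n + 1) lamp (Fin.snoc mu 0) fun _ => 1),
      ∀ (i : Fin (N+1)) (j : Fin n),
        y ⟨(i:ℕ), Nat.lt_succ_of_lt i.isLt⟩ ⟨(j:ℕ), Nat.lt_succ_of_lt j.isLt⟩ = x i j := by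
  classical
  obtain ⟨hxP, hxe⟩ := hxext
  have hxnn : ∀ i j, (0:ℝ) ≤ x i j := by
    intro i j
    refine le_trans ?_ (gtp_col_mono hxP i j)
    exact_mod_cast hmu0 j
  obtain ⟨⟨hgt1, hgt2⟩, hbot, htop, hw⟩ := hxP
  set y : Fin (N+2) → Fin (n+1) → ℝ :=
    fun i j => if hI : (i:ℕ) = N+1 then (lamp j : ℝ)
      else if hj : (j:ℕ) < n then
        x ⟨(i:ℕ), by have := i.isLt; omega⟩ ⟨(j:ℕ), hj⟩ else 0 with hydef
  have hyT : ∀ (h : N+1 < N+2) (j : Fin (n+1)), y ⟨N+1, h⟩ j = (lamp j : ℝ) := by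
    intro h j; simp [hydef]
  have hyx : ∀ (k : ℕ) (hk : k < N+1) (hk' : k < N+2) (l : ℕ) (hl : l < n)
      (hl' : l < n+1), y ⟨k, hk'⟩ ⟨l, hl'⟩ = x ⟨k, hk⟩ ⟨l, hl⟩ := by
    intro k hk hk' l hl hl'; simp [hydef, Nat.ne_of_lt hk, hl]
  have hyc : ∀ (k : ℕ) (hk : k < N+1) (hk' : k < N+2) (h : n < n+1),
      y ⟨k, hk'⟩ ⟨n, h⟩ = 0 := by
    intro k hk hk' h; simp [hydef, Nat.ne_of_lt hk]
  have hyN : ∀ (h : N < N+2) (j : Fin (n+1)),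
      y ⟨N, h⟩ j = ((Fin.snoc lam 0 : Fin (n+1) → ℤ) j : ℝ) := by
    intro h j
    obtain ⟨l, hl⟩ := j
    rw [snoc_eval]
    by_cases hln : l < n
    · rw [hyx N (by omega) h l hln hl, dif_pos hln]
      exact htop ⟨l, hln⟩
    · have hln' : l = n := by omega
      subst hln'
      rw [hyc N (by omega) h hl, dif_neg hln]
      simp
  have hle_snoc_lamp : ∀ j, (Fin.snoc lam 0 : Fin (n+1) → ℤ) j ≤ lamp j := by
    intro j
    by_cases hj : j = r
    · subst hj; omega
    · rw [hr2 j hj]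
  have hsl_anti : Antitone (Fin.snoc lam 0 : Fin (n+1) → ℤ) := by
    rintro ⟨l1, h1⟩ ⟨l2, h2⟩ h12
    rw [Fin.le_def] at h12
    simp only at h12
    rw [snoc_eval, snoc_eval]
    by_cases hb : l2 < n
    · rw [dif_pos hb, dif_pos (by omega : l1 < n)]
      exact hlam (by rw [Fin.le_def]; simpa using h12)
    · rw [dif_neg hb]
      by_cases ha : l1 < n
      · rw [dif_pos ha]
        exact le_trans (hmu0 _) (hge _)
      · rw [dif_neg ha]
  have hsum_lamp : ∑ j, (lamp j : ℝ) = (∑ l, (lam l : ℝ)) + 1 := by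
    have h : ∑ j, ((lamp j : ℝ) - ((Fin.snoc lam 0 : Fin (n+1) → ℤ) j : ℝ)) = 1 := by
      rw [Finset.sum_eq_single r]
      · have hc : ((lamp r : ℝ)) = ((Fin.snoc lam 0 : Fin (n+1) → ℤ) r : ℝ) + 1 := by
          exact_mod_cast hr1
        rw [hc]; ring
      · intro j _ hj; rw [hr2 j hj]; ring
      · simp
    rw [Finset.sum_sub_distrib, snoc_sum] at h
    linarith
  have hyP : y ∈ gtPolytope (N + 1) (n + 1) lamp (Fin.snoc mu 0) fun _ => 1 := by
    refine ⟨⟨?_, ?_⟩, ?_, ?_, ?_⟩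
    · rintro ⟨k, hk⟩ ⟨l, hl⟩
      rw [Fin.castSucc_mk, Fin.succ_mk]
      by_cases hkN : k = N
      · subst hkN
        rw [hyN, hyT]
        exact_mod_cast hle_snoc_lamp ⟨l, hl⟩
      · by_cases hln : l < n
        · rw [hyx k (by omega) (by omega) l hln hl,
            hyx (k+1) (by omega) (by omega) l hln hl]
          have h := hgt1 ⟨k, by omega⟩ ⟨l, hln⟩
          rwa [Fin.castSucc_mk, Fin.succ_mk] at h
        · have hln' : l = n := by omega
          subst hln'
          rw [hyc k (by omega) (by omega) hl, hyc (k+1) (by omega) (by omega) hl]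
    · rintro ⟨k, hk⟩ ⟨l, hl⟩ hjn
      rw [Fin.castSucc_mk, Fin.succ_mk]
      simp only [Fin.val_mk] at hjn
      have hln : l < n := by omega
      by_cases hkN : k = N
      · subst hkN
        rw [hyT, hyN]
        have hgoal : lamp ⟨l+1, hjn⟩ ≤ (Fin.snoc lam 0 : Fin (n+1) → ℤ) ⟨l, hl⟩ := by
          by_cases hlr : (⟨l, hl⟩ : Fin (n+1)) = r
          · have hne : (⟨l+1, hjn⟩ : Fin (n+1)) ≠ r := by
              rw [← hlr]
              intro h
              have := congrArg Fin.val h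
              simp at this
            rw [hr2 _ hne]
            exact hsl_anti (show (⟨l, hl⟩ : Fin (n+1)) ≤ ⟨l+1, hjn⟩ by
              rw [Fin.le_def]; simp)
          · rw [← hr2 _ hlr]
            exact hlampA (show (⟨l, hl⟩ : Fin (n+1)) ≤ ⟨l+1, hjn⟩ by
              rw [Fin.le_def]; simp)
        exact_mod_cast hgoal
      · by_cases hln1 : l + 1 < n
        · rw [hyx (k+1) (by omega) (by omega) (l+1) hln1 hjn,
            hyx k (by omega) (by omega) l hln hl]
          have h := hgt2 ⟨k, by omega⟩ ⟨l, hln⟩ hln1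
          rwa [Fin.castSucc_mk, Fin.succ_mk] at h
        · have hln' : l + 1 = n := by omega
          rw [show (⟨l+1, hjn⟩ : Fin (n+1)) = ⟨n, Nat.lt_succ_self n⟩ from
              Fin.mk_eq_mk.2 hln']
          rw [hyc (k+1) (by omega) (by omega) (Nat.lt_succ_self n),
            hyx k (by omega) (by omega) l hln hl]
          exact hxnn _ _
    · rintro ⟨l, hl⟩
      rw [show (0 : Fin (N+2)) = ⟨0, by omega⟩ from rfl]
      by_cases hln : l < n
      · rw [hyx 0 (by omega) (by omega) l hln hl, snoc_eval n mu l hl, dif_pos hln]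
        exact hbot ⟨l, hln⟩
      · have hln' : l = n := by omega
        rw [show (⟨l, hl⟩ : Fin (n+1)) = ⟨n, Nat.lt_succ_self n⟩ from Fin.mk_eq_mk.2 hln',
          hyc 0 (by omega) (by omega) (Nat.lt_succ_self n),
          snoc_eval n mu n (Nat.lt_succ_self n), dif_neg (lt_irrefl n)]
        simp
    · intro j
      rw [show Fin.last (N+1) = ⟨N+1, Nat.lt_succ_self _⟩ from rfl, hyT]
    · rintro ⟨k, hk⟩
      rw [Fin.castSucc_mk, Fin.succ_mk]
      have hsumrow : ∀ (k : ℕ) (hk : k < N+1) (hk' : k < N+2),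
          ∑ j, y ⟨k, hk'⟩ j = ∑ l, x ⟨k, hk⟩ l := by
        intro k hk hk'
        rw [Fin.sum_univ_castSucc]
        have h2 : y ⟨k, hk'⟩ (Fin.last n) = 0 := hyc k hk hk' (Nat.lt_succ_self n)
        rw [h2, add_zero]
        refine Finset.sum_congr rfl ?_
        intro l _
        exact hyx k hk hk' l.val l.isLt (by omega)
      by_cases hkN : k = N
      · rw [show (⟨k+1, by omega⟩ : Fin (N+2)) = ⟨N+1, Nat.lt_succ_self _⟩ from
            Fin.mk_eq_mk.2 (by omega),
          show (⟨k, by omega⟩ : Fin (N+2)) = ⟨N, by omega⟩ from Fin.mk_eq_mk.2 hkN]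
        have e1 : ∑ j, y (⟨N+1, Nat.lt_succ_self _⟩ : Fin (N+2)) j = ∑ j, (lamp j : ℝ) :=
          Finset.sum_congr rfl (fun j _ => hyT _ j)
        have e2 : ∑ j, y (⟨N, by omega⟩ : Fin (N+2)) j = ∑ l, (lam l : ℝ) := by
          rw [hsumrow N (by omega) (by omega)]
          exact Finset.sum_congr rfl (fun l _ => htop l)
        rw [e1, e2, hsum_lamp]
        push_cast; ring
      · rw [hsumrow (k+1) (by omega) (by omega), hsumrow k (by omega) (by omega)]
        have h := hw ⟨k, by omega⟩
        rwa [Fin.castSucc_mk, Fin.succ_mk] at h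
  refine ⟨y, mem_extremePoints.2 ⟨hyP, ?_⟩, ?_⟩
  · rintro a haP b hbP ⟨t, s, ht, hs, hts, hsum⟩
    have hpt : ∀ i j, t * a i j + s * b i j = y i j := by
      intro i j; have := congrFun (congrFun hsum i) j; simpa using this
    have hnn : ∀ c, c ∈ gtPolytope (N+1) (n+1) lamp (Fin.snoc mu 0) (fun _ => 1) →
        ∀ i : Fin (N+2), (0:ℝ) ≤ c i ⟨n, Nat.lt_succ_self n⟩ := by
      intro c hc i
      have h := gtp_col_mono hc i ⟨n, Nat.lt_succ_self n⟩
      rw [snoc_eval n mu n (Nat.lt_succ_self n), dif_neg (lt_irrefl n)] at h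
      simpa using h
    have hcolAB : ∀ (k : ℕ) (hk : k < N+1) (hk' : k < N+2),
        a ⟨k, hk'⟩ ⟨n, Nat.lt_succ_self n⟩ = 0 ∧
        b ⟨k, hk'⟩ ⟨n, Nat.lt_succ_self n⟩ = 0 := by
      intro k hk hk'
      have hc := hpt ⟨k, hk'⟩ ⟨n, Nat.lt_succ_self n⟩
      rw [hyc k hk hk' (Nat.lt_succ_self n)] at hc
      exact mid_le ht hs hts hc (hnn a haP _) (hnn b hbP _)
    have hgeT : ∀ c, c ∈ gtPolytope (N+1) (n+1) lamp (Fin.snoc mu 0) (fun _ => 1) →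
        ∀ j, c ⟨N, by omega⟩ j ≤ (lamp j : ℝ) := by
      intro c hc j
      obtain ⟨⟨hc1, _⟩, _, hcT, _⟩ := hc
      have h := hc1 ⟨N, Nat.lt_succ_self N⟩ j
      rw [Fin.castSucc_mk, Fin.succ_mk] at h
      exact le_of_le_of_eq h (hcT j)
    have hoffr : ∀ j, j ≠ r →
        a ⟨N, by omega⟩ j = ((Fin.snoc lam 0 : Fin (n+1) → ℤ) j : ℝ) ∧
        b ⟨N, by omega⟩ j = ((Fin.snoc lam 0 : Fin (n+1) → ℤ) j : ℝ) := by
      intro j hj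
      have hc := hpt ⟨N, by omega⟩ j
      rw [hyN (by omega) j] at hc
      have heq : ((lamp j : ℝ)) = ((Fin.snoc lam 0 : Fin (n+1) → ℤ) j : ℝ) := by
        exact_mod_cast hr2 j hj
      exact mid_ge ht hs hts hc (heq ▸ hgeT a haP j) (heq ▸ hgeT b hbP j)
    have hrowfix : ∀ c, c ∈ gtPolytope (N+1) (n+1) lamp (Fin.snoc mu 0) (fun _ => 1) →
        (∀ j, j ≠ r → c ⟨N, by omega⟩ j = ((Fin.snoc lam 0 : Fin (n+1) → ℤ) j : ℝ)) →
        ∀ j, c ⟨N, by omega⟩ j = ((Fin.snoc lam 0 : Fin (n+1) → ℤ) j : ℝ) := by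
      intro c hc hcj j
      by_cases hj : j = r
      · subst hj
        obtain ⟨_, _, hcT, hcw⟩ := hc
        have hwc := hcw ⟨N, Nat.lt_succ_self N⟩
        rw [Fin.castSucc_mk, Fin.succ_mk] at hwc
        have hT : ∑ j', c ⟨N+1, by omega⟩ j' = ∑ j', (lamp j' : ℝ) :=
          Finset.sum_congr rfl (fun j' _ => hcT j')
        rw [hT] at hwc
        have hs1 : ∑ j', c ⟨N, by omega⟩ j' =
            ∑ j', ((Fin.snoc lam 0 : Fin (n+1) → ℤ) j' : ℝ) := by
          rw [snoc_sum n lam]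
          push_cast at hwc ⊢
          linarith [hsum_lamp]
        have e1 := Finset.add_sum_erase Finset.univ
          (fun j' => c ⟨N, by omega⟩ j') (Finset.mem_univ j)
        have e2 := Finset.add_sum_erase Finset.univ
          (fun j' => ((Fin.snoc lam 0 : Fin (n+1) → ℤ) j' : ℝ)) (Finset.mem_univ j)
        have e3 : ∑ j' ∈ Finset.univ.erase j, c ⟨N, by omega⟩ j' =
            ∑ j' ∈ Finset.univ.erase j, ((Fin.snoc lam 0 : Fin (n+1) → ℤ) j' : ℝ) :=
          Finset.sum_congr rfl (fun j' hj' => hcj j' (Finset.ne_of_mem_erase hj'))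
        rw [e3, hs1, ← e2] at e1
        linarith
      · exact hcj j hj
    have hrowA := hrowfix a haP (fun j hj => (hoffr j hj).1)
    have hrowB := hrowfix b hbP (fun j hj => (hoffr j hj).2)
    have hrestrict : ∀ c, c ∈ gtPolytope (N+1) (n+1) lamp (Fin.snoc mu 0) (fun _ => 1) →
        (∀ j, c ⟨N, by omega⟩ j = ((Fin.snoc lam 0 : Fin (n+1) → ℤ) j : ℝ)) →
        (∀ (k : ℕ) (hk : k < N+1) (hk' : k < N+2),
          c ⟨k, hk'⟩ ⟨n, Nat.lt_succ_self n⟩ = 0) →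
        (fun (i : Fin (N+1)) (l : Fin n) =>
          c ⟨(i:ℕ), Nat.lt_succ_of_lt i.isLt⟩ ⟨(l:ℕ), Nat.lt_succ_of_lt l.isLt⟩)
          ∈ gtPolytope N n lam mu (fun _ => 1) := by
      intro c hc hrowN hcol
      obtain ⟨⟨hc1, hc2⟩, hc0, hcT, hcw⟩ := hc
      refine ⟨⟨?_, ?_⟩, ?_, ?_, ?_⟩
      · rintro ⟨k, hk⟩ ⟨l, hl⟩
        have h := hc1 ⟨k, by omega⟩ ⟨l, by omega⟩
        rwa [Fin.castSucc_mk, Fin.succ_mk] at h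
      · rintro ⟨k, hk⟩ ⟨l, hl⟩ hjn
        have h := hc2 ⟨k, by omega⟩ ⟨l, by omega⟩ (by omega : l + 1 < n + 1)
        rwa [Fin.castSucc_mk, Fin.succ_mk] at h
      · rintro ⟨l, hl⟩
        have h := hc0 ⟨l, by omega⟩
        rw [snoc_eval n mu l (by omega), dif_pos hl] at h
        exact h
      · rintro ⟨l, hl⟩
        have h := hrowN ⟨l, by omega⟩
        rw [snoc_eval n lam l (by omega), dif_pos hl] at h
        exact h
      · rintro ⟨k, hk⟩
        have hrowsum : ∀ (k : ℕ) (hk : k < N+1) (hk' : k < N+2),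
            ∑ j, c ⟨k, hk'⟩ j =
            ∑ l : Fin n, c ⟨k, hk'⟩ ⟨(l:ℕ), Nat.lt_succ_of_lt l.isLt⟩ := by
          intro k hk hk'
          rw [Fin.sum_univ_castSucc,
            show c ⟨k, hk'⟩ (Fin.last n) = 0 from hcol k hk hk', add_zero]
          exact Finset.sum_congr rfl (fun l _ => rfl)
        have h := hcw ⟨k, by omega⟩
        rw [Fin.castSucc_mk, Fin.succ_mk, hrowsum k (by omega) (by omega),
          hrowsum (k+1) (by omega) (by omega)] at h
        exact h
    have ha'P := hrestrict a haP hrowA (fun k hk hk' => (hcolAB k hk hk').1)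
    have hb'P := hrestrict b hbP hrowB (fun k hk hk' => (hcolAB k hk hk').2)
    have hxseg : x ∈ openSegment ℝ
        (fun (i : Fin (N+1)) (l : Fin n) =>
          a ⟨(i:ℕ), Nat.lt_succ_of_lt i.isLt⟩ ⟨(l:ℕ), Nat.lt_succ_of_lt l.isLt⟩)
        (fun (i : Fin (N+1)) (l : Fin n) =>
          b ⟨(i:ℕ), Nat.lt_succ_of_lt i.isLt⟩ ⟨(l:ℕ), Nat.lt_succ_of_lt l.isLt⟩) := by
      refine ⟨t, s, ht, hs, hts, ?_⟩
      funext i l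
      have h := hpt ⟨(i:ℕ), Nat.lt_succ_of_lt i.isLt⟩ ⟨(l:ℕ), Nat.lt_succ_of_lt l.isLt⟩
      rw [hyx (i:ℕ) i.isLt (Nat.lt_succ_of_lt i.isLt) (l:ℕ) l.isLt
        (Nat.lt_succ_of_lt l.isLt)] at h
      simpa [Fin.eta] using h
    obtain ⟨ha'x, hb'x⟩ := And.intro (hxe ha'P hb'P hxseg)
      (hxe hb'P ha'P (by rw [openSegment_symm]; exact hxseg))
    constructor
    · funext i j
      obtain ⟨k, hk⟩ := i
      obtain ⟨l, hl⟩ := j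
      by_cases hkN : k = N+1
      · rw [show (⟨k, hk⟩ : Fin (N+2)) = ⟨N+1, Nat.lt_succ_self _⟩ from
            Fin.mk_eq_mk.2 hkN, hyT]
        exact haP.2.2.1 ⟨l, hl⟩
      · have hkN' : k < N+1 := by omega
        by_cases hln : l < n
        · rw [hyx k hkN' hk l hln hl]
          exact congrFun (congrFun ha'x ⟨k, hkN'⟩) ⟨l, hln⟩
        · have hln' : l = n := by omega
          rw [show (⟨l, hl⟩ : Fin (n+1)) = ⟨n, Nat.lt_succ_self n⟩ from
            Fin.mk_eq_mk.2 hln', hyc k hkN' hk (Nat.lt_succ_self n)]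
          exact (hcolAB k hkN' hk).1
    · funext i j
      obtain ⟨k, hk⟩ := i
      obtain ⟨l, hl⟩ := j
      by_cases hkN : k = N+1
      · rw [show (⟨k, hk⟩ : Fin (N+2)) = ⟨N+1, Nat.lt_succ_self _⟩ from
            Fin.mk_eq_mk.2 hkN, hyT]
        exact hbP.2.2.1 ⟨l, hl⟩
      · have hkN' : k < N+1 := by omega
        by_cases hln : l < n
        · rw [hyx k hkN' hk l hln hl]
          exact congrFun (congrFun hb'x ⟨k, hkN'⟩) ⟨l, hln⟩
        · have hln' : l = n := by omega
          rw [show (⟨l, hl⟩ : Fin (n+1)) = ⟨n, Nat.lt_succ_self n⟩ from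
            Fin.mk_eq_mk.2 hln', hyc k hkN' hk (Nat.lt_succ_self n)]
          exact (hcolAB k hkN' hk).2
  · intro i j
    exact hyx (i:ℕ) i.isLt (Nat.lt_succ_of_lt i.isLt) (j:ℕ) j.isLt
      (Nat.lt_succ_of_lt j.isLt)

private lemma aux_b {n N : ℕ} {lam mu mum : Fin n → ℤ} {x : Fin (N+1) → Fin n → ℝ}
    (hmu : Antitone mu)
    (hxext : x ∈ Set.extremePoints ℝ (gtPolytope N n lam mu fun _ => 1))
    (hmumA : Antitone mum) (r : Fin n) (hr1 : mum r = mu r - 1)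
    (hr2 : ∀ i, i ≠ r → mum i = mu i) :
    ∃ y ∈ Set.extremePoints ℝ (gtPolytope (N + 1) n lam mum fun _ => 1),
      ∀ (i : Fin (N+1)) (j : Fin n),
        y ⟨(i:ℕ)+1, Nat.succ_lt_succ i.isLt⟩ j = x i j := by
  classical
  obtain ⟨hxP, hxe⟩ := hxext
  obtain ⟨⟨hgt1, hgt2⟩, hbot, htop, hw⟩ := hxP
  -- the shifted pattern
  set y : Fin (N+2) → Fin n → ℝ :=
    fun i j => if hI : (i:ℕ) = 0 then (mum j : ℝ)
      else x ⟨(i:ℕ)-1, by have := i.isLt; omega⟩ j with hydef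
  have hy0 : ∀ (h : 0 < N+2) (j : Fin n), y ⟨0, h⟩ j = (mum j : ℝ) := by
    intro h j; simp [hydef]
  have hyk : ∀ (k : ℕ) (h : k+1 < N+2) (j : Fin n),
      y ⟨k+1, h⟩ j = x ⟨k, by omega⟩ j := by
    intro k h j; simp [hydef]
  have hmum_le : ∀ j, mum j ≤ mu j := by
    intro j
    by_cases hj : j = r
    · subst hj; omega
    · rw [hr2 j hj]
  have hsum_mum : ∑ j, (mum j : ℝ) = (∑ j, (mu j : ℝ)) - 1 := by
    have h : ∑ j, ((mum j : ℝ) - (mu j : ℝ)) = -1 := by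
      rw [Finset.sum_eq_single r]
      · have hc : ((mum r : ℝ)) = ((mu r : ℝ)) - 1 := by exact_mod_cast hr1
        rw [hc]; ring
      · intro j _ hj; rw [hr2 j hj]; ring
      · simp
    rw [Finset.sum_sub_distrib] at h; linarith
  -- membership
  have hyP : y ∈ gtPolytope (N + 1) n lam mum fun _ => 1 := by
    refine ⟨⟨?_, ?_⟩, ?_, ?_, ?_⟩
    · rintro ⟨k, hk⟩ j
      rw [Fin.castSucc_mk, Fin.succ_mk]
      cases k with
      | zero =>
        rw [hy0, hyk]
        rw [show x ⟨0, Nat.succ_pos N⟩ j = (mu j : ℝ) from hbot j]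
        exact_mod_cast hmum_le j
      | succ k =>
        rw [hyk, hyk]
        have h := hgt1 ⟨k, by omega⟩ j
        rwa [Fin.castSucc_mk, Fin.succ_mk] at h
    · rintro ⟨k, hk⟩ j hjn
      rw [Fin.castSucc_mk, Fin.succ_mk]
      cases k with
      | zero =>
        rw [hy0, hyk]
        rw [show x ⟨0, Nat.succ_pos N⟩ ⟨(j:ℕ)+1, hjn⟩ = (mu ⟨(j:ℕ)+1, hjn⟩ : ℝ) from hbot _]
        have hle : mu ⟨(j:ℕ)+1, hjn⟩ ≤ mum j := by
          by_cases hjr : j = r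
          · subst hjr
            have hne : (⟨(j:ℕ)+1, hjn⟩ : Fin n) ≠ j := by
              intro h; have := congrArg Fin.val h; simp at this
            rw [← hr2 _ hne]
            exact hmumA (by rw [Fin.le_def]; simp)
          · rw [hr2 j hjr]
            exact hmu (by rw [Fin.le_def]; simp)
        exact_mod_cast hle
      | succ k =>
        rw [hyk, hyk]
        have h := hgt2 ⟨k, by omega⟩ j hjn
        rwa [Fin.castSucc_mk, Fin.succ_mk] at h
    · intro j
      exact hy0 _ j
    · intro j
      rw [show Fin.last (N+1) = ⟨N+1, Nat.lt_succ_self _⟩ from rfl, hyk]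
      exact htop j
    · rintro ⟨k, hk⟩
      rw [Fin.castSucc_mk, Fin.succ_mk]
      cases k with
      | zero =>
        simp only [hyk, hy0]
        have h0 : ∀ j, x (⟨0, Nat.succ_pos N⟩ : Fin (N+1)) j = (mu j : ℝ) := hbot
        simp only [h0, hsum_mum]
        push_cast; ring
      | succ k =>
        simp only [hyk]
        have h := hw ⟨k, by omega⟩
        rwa [Fin.castSucc_mk, Fin.succ_mk] at h
  refine ⟨y, mem_extremePoints.2 ⟨hyP, ?_⟩, ?_⟩
  · -- extremality
    rintro a haP b hbP ⟨t, s, ht, hs, hts, hsum⟩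
    have hpt : ∀ i j, t * a i j + s * b i j = y i j := by
      intro i j
      have := congrFun (congrFun hsum i) j
      simpa using this
    -- row 1 of any member is ≥ mu off r
    have hge1 : ∀ c, c ∈ gtPolytope (N + 1) n lam mum (fun _ => 1) →
        ∀ j, (mum j : ℝ) ≤ c ⟨1, by omega⟩ j := by
      intro c hc j
      obtain ⟨⟨hc1, _⟩, hc0, _, _⟩ := hc
      have h := hc1 ⟨0, Nat.succ_pos N⟩ j
      rw [Fin.castSucc_mk, Fin.succ_mk] at h
      calc (mum j : ℝ) = c ⟨0, by omega⟩ j := (hc0 j).symm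
        _ ≤ c ⟨1, by omega⟩ j := h
    -- rows 1 of a and b equal mu
    have hy1 : ∀ j, y ⟨1, by omega⟩ j = (mu j : ℝ) := by
      intro j
      rw [show (⟨1, by omega⟩ : Fin (N+2)) = ⟨0+1, by omega⟩ from rfl, hyk]
      exact hbot j
    have hoffr : ∀ j, j ≠ r → a ⟨1, by omega⟩ j = (mu j : ℝ) ∧ b ⟨1, by omega⟩ j = (mu j : ℝ) := by
      intro j hj
      have hc := hpt ⟨1, by omega⟩ j
      rw [hy1 j] at hc
      have ha := hge1 a haP j
      have hb := hge1 b hbP j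
      rw [hr2 j hj] at ha hb
      exact mid_le ht hs hts hc ha hb
    have hrowfix : ∀ c, c ∈ gtPolytope (N + 1) n lam mum (fun _ => 1) →
        (∀ j, j ≠ r → c ⟨1, by omega⟩ j = (mu j : ℝ)) →
        ∀ j, c ⟨1, by omega⟩ j = (mu j : ℝ) := by
      intro c hc hcj j
      by_cases hj : j = r
      · subst hj
        obtain ⟨_, hc0, _, hcw⟩ := hc
        have hwc := hcw ⟨0, Nat.succ_pos N⟩
        rw [Fin.castSucc_mk, Fin.succ_mk] at hwc
        have hb0 : ∀ j', c ⟨0, by omega⟩ j' = (mum j' : ℝ) := hc0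
        simp only [hb0] at hwc
        rw [hsum_mum] at hwc
        have hs1 : ∑ j', c ⟨1, by omega⟩ j' = ∑ j', (mu j' : ℝ) := by
          push_cast at hwc ⊢; linarith
        have e1 := Finset.add_sum_erase Finset.univ (fun j' => c ⟨1, by omega⟩ j') (Finset.mem_univ j)
        have e2 := Finset.add_sum_erase Finset.univ (fun j' => ((mu j' : ℝ))) (Finset.mem_univ j)
        have e3 : ∑ j' ∈ Finset.univ.erase j, c ⟨1, by omega⟩ j' =
            ∑ j' ∈ Finset.univ.erase j, ((mu j' : ℝ)) := by
          refine Finset.sum_congr rfl ?_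
          intro j' hj'
          exact hcj j' (Finset.ne_of_mem_erase hj')
        rw [e3] at e1
        rw [hs1] at e1
        rw [← e2] at e1
        linarith
      · exact hcj j hj
    have hrowA : ∀ j, a ⟨1, by omega⟩ j = (mu j : ℝ) :=
      hrowfix a haP (fun j hj => (hoffr j hj).1)
    have hrowB : ∀ j, b ⟨1, by omega⟩ j = (mu j : ℝ) :=
      hrowfix b hbP (fun j hj => (hoffr j hj).2)
    -- restrictions
    have hrestrict : ∀ c, c ∈ gtPolytope (N + 1) n lam mum (fun _ => 1) →
        (∀ j, c ⟨1, by omega⟩ j = (mu j : ℝ)) →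
        (fun (i : Fin (N+1)) (j : Fin n) =>
          c ⟨(i:ℕ)+1, Nat.succ_lt_succ i.isLt⟩ j) ∈ gtPolytope N n lam mu (fun _ => 1) := by
      intro c hc hc1row
      obtain ⟨⟨hc1, hc2⟩, hc0, hcT, hcw⟩ := hc
      refine ⟨⟨?_, ?_⟩, ?_, ?_, ?_⟩
      · rintro ⟨k, hk⟩ j
        have h := hc1 ⟨k+1, by omega⟩ j
        rwa [Fin.castSucc_mk, Fin.succ_mk] at h
      · rintro ⟨k, hk⟩ j hjn
        have h := hc2 ⟨k+1, by omega⟩ j hjn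
        rwa [Fin.castSucc_mk, Fin.succ_mk] at h
      · intro j
        exact hc1row j
      · intro j
        have h := hcT j
        rwa [show Fin.last (N+1) = ⟨N+1, Nat.lt_succ_self _⟩ from rfl] at h
      · rintro ⟨k, hk⟩
        have h := hcw ⟨k+1, by omega⟩
        rwa [Fin.castSucc_mk, Fin.succ_mk] at h
    have ha'P := hrestrict a haP hrowA
    have hb'P := hrestrict b hbP hrowB
    have hxseg : x ∈ openSegment ℝ
        (fun (i : Fin (N+1)) (j : Fin n) => a ⟨(i:ℕ)+1, Nat.succ_lt_succ i.isLt⟩ j)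
        (fun (i : Fin (N+1)) (j : Fin n) => b ⟨(i:ℕ)+1, Nat.succ_lt_succ i.isLt⟩ j) := by
      refine ⟨t, s, ht, hs, hts, ?_⟩
      funext i j
      have h := hpt ⟨(i:ℕ)+1, Nat.succ_lt_succ i.isLt⟩ j
      rw [hyk] at h
      simpa [Fin.eta] using h
    obtain ⟨ha'x, hb'x⟩ := And.intro (hxe ha'P hb'P hxseg)
      (hxe hb'P ha'P (by rw [openSegment_symm]; exact hxseg))
    constructor
    · funext i j
      obtain ⟨k, hk⟩ := i
      cases k with
      | zero =>
        rw [hy0]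
        exact haP.2.1 j
      | succ k =>
        rw [hyk]
        exact congrFun (congrFun ha'x ⟨k, by omega⟩) j
    · funext i j
      obtain ⟨k, hk⟩ := i
      cases k with
      | zero =>
        rw [hy0]
        exact hbP.2.1 j
      | succ k =>
        rw [hyk]
        exact congrFun (congrFun hb'x ⟨k, by omega⟩) j
  · intro i j
    rw [hyk]

/-- If `P_{λ/μ,1}` has a non-integral extreme point, then (a) adding one box to
`λ` (after padding `λ` and `μ` with a trailing zero) and (b) removing one box
from `μ` both yield polytopes (with weight `1` of length `|λ|-|μ|+1`) having a
non-integral extreme point. -/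
theorem statement8 (n : ℕ) (hn : 1 ≤ n) (lam mu : Fin n → ℤ)
    (hlam : Antitone lam) (hmu : Antitone mu)
    (hmu0 : ∀ j, 0 ≤ mu j) (hge : ∀ j, mu j ≤ lam j)
    (N : ℕ) (hN : (N : ℤ) = ∑ j, lam j - ∑ j, mu j)
    (hnonint : ∃ x ∈ Set.extremePoints ℝ (gtPolytope N n lam mu fun _ => 1),
      ∃ i j, ∀ z : ℤ, x i j ≠ (z : ℝ)) :
    (∀ lamp : Fin (n + 1) → ℤ, Antitone lamp → (∀ j, 0 ≤ lamp j) →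
      (∃ r : Fin (n + 1), lamp r = (Fin.snoc lam 0 : Fin (n + 1) → ℤ) r + 1 ∧
        ∀ i, i ≠ r → lamp i = (Fin.snoc lam 0 : Fin (n + 1) → ℤ) i) →
      ∃ x ∈ Set.extremePoints ℝ
          (gtPolytope (N + 1) (n + 1) lamp (Fin.snoc mu 0) fun _ => 1),
        ∃ i j, ∀ z : ℤ, x i j ≠ (z : ℝ)) ∧
    (∀ mum : Fin n → ℤ, Antitone mum → (∀ j, 0 ≤ mum j) →
      (∃ r : Fin n, mum r = mu r - 1 ∧ ∀ i, i ≠ r → mum i = mu i) →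
      ∃ x ∈ Set.extremePoints ℝ (gtPolytope (N + 1) n lam mum fun _ => 1),
        ∃ i j, ∀ z : ℤ, x i j ≠ (z : ℝ)) := by
  obtain ⟨x, hxext, i0, j0, hni⟩ := hnonint
  constructor
  · rintro lamp hlampA hlampN ⟨r, hr1, hr2⟩
    obtain ⟨y, hyext, hyeq⟩ := aux_a hlam hmu0 hge hxext hlampA hlampN r hr1 hr2
    refine ⟨y, hyext, ⟨(i0:ℕ), Nat.lt_succ_of_lt i0.isLt⟩,
      ⟨(j0:ℕ), Nat.lt_succ_of_lt j0.isLt⟩, ?_⟩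
    rw [hyeq i0 j0]
    exact hni
  · rintro mum hmumA hmumN ⟨r, hr1, hr2⟩
    obtain ⟨y, hyext, hyeq⟩ := aux_b hmu hxext hmumA r hr1 hr2
    refine ⟨y, hyext, ⟨(i0:ℕ)+1, Nat.succ_lt_succ i0.isLt⟩, j0, ?_⟩
    rw [hyeq i0 j0]
    exact hni
end
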